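/- arXiv:2511.22469 — 9 statements merged into one kernel-verified Lean document; each statement's English description precedes it below -/
import Mathlib

section
/- There is no sequence (Γ_n)_{n∈ℕ} of maps from the class Ω_h of bounded self-adjoint operators on ℓ²(ℕ) into the space of nonempty compact subsets of ℂ such that both: (i) each Γ_n has the finite-determination property, i.e. for every A ∈ Ω_h there exists a finite set S ⊆ ℕ×ℕ such that every B ∈ Ω_h whose matrix entries satisfy ⟨B e_j, e_i⟩ = ⟨A e_j, e_i⟩ for all (i,j) ∈ S necessarily satisfies Γ_n(B) = Γ_n(A); and (ii) for every H ∈ Ω_h, the sets Γ_n(H) converge to the spectrum Sp(H) in the Hausdorff metric as n → ∞. -/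
open scoped InnerProductSpace
open scoped ENNReal

/-- The canonical basis vector `e n` of `ℓ²(ℕ)`. -/
noncomputable def eVec (n : ℕ) : lp (fun _ : ℕ => ℂ) 2 := lp.single 2 n 1

/-- The matrix entry `⟨A e_j, e_i⟩` of a bounded operator on `ℓ²(ℕ)`. -/
noncomputable def matEntry
    (A : lp (fun _ : ℕ => ℂ) 2 →L[ℂ] lp (fun _ : ℕ => ℂ) 2) (i j : ℕ) : ℂ :=
  ⟪A (eVec j), eVec i⟫_ℂ

noncomputable abbrev Hs : Type := lp (fun _ : ℕ => ℂ) 2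

namespace SCI

variable (σ : ℕ → ℕ) (c : ℕ → ℂ)

theorem sum2 (u : Hs) : Summable (fun i => ‖(u : ∀ _ : ℕ, ℂ) i‖ ^ (2:ℝ)) := by
  have := lp.memℓp u
  rw [memℓp_gen_iff (p := 2) (by norm_num)] at this
  simpa using this

theorem mem_op (hσ : Function.Injective σ) (hc : ∀ i, ‖c i‖ ≤ 1) (u : Hs) :
    Memℓp (fun j => c j * u (σ j)) 2 := by
  apply memℓp_gen
  simp only [ENNReal.toReal_ofNat]
  have h2 : Summable (fun j => ‖u (σ j)‖ ^ (2:ℝ)) := (sum2 u).comp_injective hσ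
  apply Summable.of_nonneg_of_le (f := fun j => ‖u (σ j)‖ ^ (2:ℝ))
    (fun j => by positivity) (fun j => ?_) h2
  have h : ‖c j * u (σ j)‖ ≤ ‖u (σ j)‖ := by
    rw [norm_mul]
    calc ‖c j‖ * ‖u (σ j)‖ ≤ 1 * ‖u (σ j)‖ :=
          mul_le_mul_of_nonneg_right (hc j) (norm_nonneg _)
      _ = ‖u (σ j)‖ := one_mul _
  exact Real.rpow_le_rpow (norm_nonneg _) h zero_le_two

end SCI

namespace SCI

variable {σ : ℕ → ℕ} {c : ℕ → ℂ}

noncomputable def Op (hσ : Function.Involutive σ) (hc : ∀ i, ‖c i‖ ≤ 1) : Hs →L[ℂ] Hs :=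
  LinearMap.mkContinuous
    { toFun := fun u => ⟨fun j => c j * u (σ j), mem_op σ c hσ.injective hc u⟩
      map_add' := fun u v => by
        apply lp.ext; funext j
        simp [lp.coeFn_add, Pi.add_apply]; rw [mul_add]; rfl
      map_smul' := fun r u => by
        apply lp.ext; funext j
        simp [lp.coeFn_smul, Pi.smul_apply, smul_eq_mul]; ring }
    1
    (fun u => by
      simp only [LinearMap.coe_mk, AddHom.coe_mk, one_mul]
      have hB : (0:ℝ) < (2:ℝ≥0∞).toReal := by norm_num
      rw [← pow_le_pow_iff_left₀ (norm_nonneg _) (norm_nonneg u) (two_ne_zero)]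
      have e1 := lp.norm_rpow_eq_tsum hB (⟨fun j => c j * u (σ j), mem_op σ c hσ.injective hc u⟩ : Hs)
      have e2 := lp.norm_rpow_eq_tsum hB u
      simp only [ENNReal.toReal_ofNat] at e1 e2
      have p1 : ‖(⟨fun j => c j * u (σ j), mem_op σ c hσ.injective hc u⟩ : Hs)‖ ^ (2:ℕ)
          = ∑' j, ‖c j * u (σ j)‖ ^ (2:ℝ) := by
        rw [← e1]; rw [← Real.rpow_natCast]; norm_num
      have p2 : ‖u‖ ^ (2:ℕ) = ∑' i, ‖u i‖ ^ (2:ℝ) := by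
        rw [← e2]; rw [← Real.rpow_natCast]; norm_num
      rw [p1, p2]
      have hsum1 : Summable (fun j => ‖c j * u (σ j)‖ ^ (2:ℝ)) := by
        have := mem_op σ c hσ.injective hc u
        rw [memℓp_gen_iff (p := 2) (by norm_num)] at this
        simpa using this
      have hsum2 : Summable (fun j => ‖u (σ j)‖ ^ (2:ℝ)) :=
        (sum2 u).comp_injective hσ.injective
      calc ∑' j, ‖c j * u (σ j)‖ ^ (2:ℝ) ≤ ∑' j, ‖u (σ j)‖ ^ (2:ℝ) := by
            apply Summable.tsum_le_tsum _ hsum1 hsum2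
            intro j
            apply Real.rpow_le_rpow (norm_nonneg _) _ zero_le_two
            rw [norm_mul]
            calc ‖c j‖ * ‖u (σ j)‖ ≤ 1 * ‖u (σ j)‖ :=
                  mul_le_mul_of_nonneg_right (hc j) (norm_nonneg _)
              _ = ‖u (σ j)‖ := one_mul _
        _ = ∑' i, ‖u i‖ ^ (2:ℝ) := Equiv.tsum_eq (Function.Involutive.toPerm σ hσ) (fun i => ‖u i‖ ^ (2:ℝ)))

theorem Op_apply (hσ : Function.Involutive σ) (hc : ∀ i, ‖c i‖ ≤ 1) (u : Hs) (j : ℕ) :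
    (Op hσ hc u) j = c j * u (σ j) := rfl

end SCI

namespace SCI

variable {σ : ℕ → ℕ} {c : ℕ → ℂ}

theorem Op_selfAdjoint (hσ : Function.Involutive σ) (hc : ∀ i, ‖c i‖ ≤ 1)
    (hcr : ∀ i, (starRingEnd ℂ) (c i) = c i) (horb : ∀ i, c (σ i) = c i) :
    IsSelfAdjoint (Op hσ hc) := by
  rw [ContinuousLinearMap.isSelfAdjoint_iff_isSymmetric]
  intro u v
  rw [ContinuousLinearMap.coe_coe]  -- maybe not needed
  show ⟪Op hσ hc u, v⟫_ℂ = ⟪u, Op hσ hc v⟫_ℂ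
  rw [lp.inner_eq_tsum, lp.inner_eq_tsum]
  have key : ∀ j, ⟪u j, (Op hσ hc v) j⟫_ℂ
      = (fun j => ⟪(Op hσ hc u) j, v j⟫_ℂ) (σ j) := by
    intro j
    simp only [Op_apply, RCLike.inner_apply, map_mul, hσ j]
    rw [hcr, horb]
    ring
  calc ∑' j, ⟪(Op hσ hc u) j, v j⟫_ℂ
      = ∑' j, (fun j => ⟪(Op hσ hc u) j, v j⟫_ℂ) (σ j) :=
        (Equiv.tsum_eq (Function.Involutive.toPerm σ hσ) _).symm
    _ = ∑' j, ⟪u j, (Op hσ hc v) j⟫_ℂ := by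
        congr 1; funext j; rw [key j]

end SCI

namespace SCI

variable {σ : ℕ → ℕ} {c : ℕ → ℂ}

theorem eVec_apply (n j : ℕ) : (eVec n) j = if j = n then 1 else 0 := by
  rw [eVec, lp.single_apply]
  split_ifs with h
  · subst h; simp
  · simp [h]

theorem eVec_ne_zero (n : ℕ) : eVec n ≠ 0 := by
  intro h
  have h1 : (eVec n) n = 1 := by rw [eVec_apply]; simp
  rw [h] at h1
  have : ((0 : Hs) : ∀ _ : ℕ, ℂ) n = 0 := by rw [lp.coeFn_zero]; rfl
  rw [this] at h1
  exact one_ne_zero h1.symm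

theorem matEntry_op (hσ : Function.Involutive σ) (hc : ∀ i, ‖c i‖ ≤ 1) (i j : ℕ) :
    matEntry (Op hσ hc) i j = (starRingEnd ℂ) (c i) * (if σ i = j then 1 else 0) := by
  rw [matEntry, lp.inner_eq_tsum]
  rw [tsum_eq_single i]
  · simp only [Op_apply, RCLike.inner_apply, eVec_apply, map_mul]
    split_ifs <;> simp
  · intro k hk
    simp only [RCLike.inner_apply, eVec_apply]
    rw [if_neg hk, zero_mul]

theorem Op_vanish (hσ : Function.Involutive σ) (hc : ∀ i, ‖c i‖ ≤ 1) {m : ℕ}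
    (hfix : σ m = m) (hcm : c m = 0) : Op hσ hc (eVec m) = 0 := by
  apply lp.ext; funext j
  rw [Op_apply]
  by_cases h : σ j = m
  · have hjm : j = m := by
      calc j = σ (σ j) := (hσ j).symm
        _ = σ m := by rw [h]
        _ = m := hfix
    rw [hjm, hcm, zero_mul]
    exact (congrFun (lp.coeFn_zero (fun _ : ℕ => ℂ) 2) j).symm
  · rw [eVec_apply, if_neg h, mul_zero]
    exact (congrFun (lp.coeFn_zero (fun _ : ℕ => ℂ) 2) j).symm

theorem zero_mem_spectrum_of_vanish {T : Hs →L[ℂ] Hs} {v : Hs} (hv : v ≠ 0) (h : T v = 0) :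
    (0 : ℂ) ∈ spectrum ℂ T := by
  rw [spectrum.zero_mem_iff]
  rintro ⟨u, hu⟩
  apply hv
  calc v = (1 : Hs →L[ℂ] Hs) v := rfl
    _ = ((↑u⁻¹ * ↑u : Hs →L[ℂ] Hs)) v := by rw [u.inv_mul]
    _ = (↑u⁻¹ : Hs →L[ℂ] Hs) (T v) := by rw [ContinuousLinearMap.mul_apply, hu]
    _ = 0 := by rw [h, map_zero]

end SCI

namespace SCI

variable {σ : ℕ → ℕ}

theorem one_bound : ∀ i : ℕ, ‖((fun _ => 1 : ℕ → ℂ)) i‖ ≤ 1 := fun _ => by simp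

theorem Op_sq (hσ : Function.Involutive σ) :
    (Op hσ one_bound) * (Op hσ one_bound) = 1 := by
  ext u : 1
  apply lp.ext; funext j
  rw [ContinuousLinearMap.mul_apply, Op_apply, Op_apply, hσ j]
  simp

theorem spectrum_subset_of_sq_one {A : Type*} [NormedRing A] [NormedAlgebra ℂ A]
    {a : A} (h : a * a = 1) : spectrum ℂ a ⊆ {-1, 1} := by
  intro z hz
  by_contra hne
  simp only [Set.mem_insert_iff, Set.mem_singleton_iff] at hne
  push_neg at hne
  obtain ⟨h1, h2⟩ := hne
  have hzz : z ^ 2 - 1 ≠ 0 := by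
    intro hc
    have : (z - 1) * (z + 1) = 0 := by ring_nf; linear_combination hc
    rcases mul_eq_zero.1 this with h | h
    · exact h2 (by rw [sub_eq_zero] at h; exact h)
    · exact h1 (by have := eq_neg_of_add_eq_zero_left h; simp [this])
  rw [spectrum.mem_iff] at hz
  apply hz
  set L := algebraMap ℂ A z with hL
  have comm : a * L = L * a := (Algebra.commutes z a).symm
  have key : (L - a) * (L + a) = algebraMap ℂ A (z ^ 2 - 1) := by
    have : (L - a) * (L + a) = L * L + L * a - a * L - a * a := by noncomm_ring
    rw [this, comm, h, hL, ← map_mul,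
      show z * z = z ^ 2 - 1 + 1 by ring, map_add, map_one]
    abel
  have key2 : (L + a) * (L - a) = algebraMap ℂ A (z ^ 2 - 1) := by
    have : (L + a) * (L - a) = L * L - L * a + a * L - a * a := by noncomm_ring
    rw [this, comm, h, hL, ← map_mul,
      show z * z = z ^ 2 - 1 + 1 by ring, map_add, map_one]
    abel
  refine ⟨⟨L - a, (z ^ 2 - 1)⁻¹ • (L + a), ?_, ?_⟩, rfl⟩
  · rw [mul_smul_comm, key, Algebra.smul_def, ← map_mul]
    rw [inv_mul_cancel₀ hzz, map_one]
  · rw [smul_mul_assoc, key2, Algebra.smul_def, ← map_mul]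
    rw [inv_mul_cancel₀ hzz, map_one]

end SCI

namespace SCI

/-- A "B-state": a partial-isometry-type symmetric permutation structure. -/
structure St where
  f : ℕ → ℕ
  m : ℕ
  inv : Function.Involutive f
  fix : ∀ i, m ≤ i → f i = i
  lt : ∀ i, i < m → f i < m

/-- c-sequence of a B-state. -/
def cB (m : ℕ) : ℕ → ℂ := fun i => if i < m then 1 else 0

theorem cB_bound (m : ℕ) : ∀ i, ‖cB m i‖ ≤ 1 := by
  intro i; rw [cB]; split_ifs <;> simp

theorem cB_conj (m : ℕ) : ∀ i, (starRingEnd ℂ) (cB m i) = cB m i := by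
  intro i; rw [cB]; split_ifs <;> simp

noncomputable def St.op (s : St) : Hs →L[ℂ] Hs := Op s.inv (cB_bound s.m)

theorem St.sa (s : St) : IsSelfAdjoint s.op := by
  apply Op_selfAdjoint _ _ (cB_conj s.m)
  intro i
  rw [cB, cB]
  by_cases h : i < s.m
  · rw [if_pos (s.lt i h), if_pos h]
  · rw [s.fix i (le_of_not_gt h), if_neg h]

theorem St.zero_mem (s : St) : (0 : ℂ) ∈ spectrum ℂ s.op := by
  apply zero_mem_spectrum_of_vanish (eVec_ne_zero s.m)
  apply Op_vanish _ _ (s.fix s.m le_rfl)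
  rw [cB, if_neg (lt_irrefl s.m)]

/-- The dilating involution of mode A. -/
def sigA (s : St) (N : ℕ) : ℕ → ℕ := fun i =>
  if s.m ≤ i ∧ i < N then i + N
  else if N + s.m ≤ i ∧ i < 2 * N then i - N
  else s.f i

theorem sigA_low (s : St) {N : ℕ} {i : ℕ} (h : i < s.m) : sigA s N i = s.f i := by
  have := s.lt i h
  rw [sigA, if_neg (by omega), if_neg (by omega)]

theorem sigA_mid (s : St) {N : ℕ} {i : ℕ} (h1 : s.m ≤ i) (h2 : i < N) :
    sigA s N i = i + N := by
  rw [sigA, if_pos ⟨h1, h2⟩]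

theorem sigA_mid2 (s : St) {N : ℕ} (hN : s.m ≤ N) {i : ℕ} (h1 : N + s.m ≤ i)
    (h2 : i < 2 * N) : sigA s N i = i - N := by
  rw [sigA, if_neg (by omega), if_pos ⟨h1, h2⟩]

theorem sigA_tail1 (s : St) {N : ℕ} (hN : s.m ≤ N) {i : ℕ} (h1 : N ≤ i)
    (h2 : i < N + s.m) : sigA s N i = i := by
  rw [sigA, if_neg (by omega), if_neg (by omega)]
  exact s.fix i (by omega)

theorem sigA_fix (s : St) {N : ℕ} (hN : s.m ≤ N) {i : ℕ} (h : 2 * N ≤ i) :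
    sigA s N i = i := by
  rw [sigA, if_neg (by omega), if_neg (by omega)]
  exact s.fix i (by omega)

theorem sigA_inv (s : St) {N : ℕ} (hN : s.m ≤ N) : Function.Involutive (sigA s N) := by
  intro i
  rcases lt_or_ge i s.m with h | h
  · rw [sigA_low s h, sigA_low s (s.lt i h), s.inv i]
  rcases lt_or_ge i N with h2 | h2
  · rw [sigA_mid s h h2, sigA_mid2 s hN (by omega) (by omega)]
    omega
  rcases lt_or_ge i (N + s.m) with h3 | h3
  · rw [sigA_tail1 s hN h2 h3, sigA_tail1 s hN h2 h3]
  rcases lt_or_ge i (2 * N) with h4 | h4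
  · rw [sigA_mid2 s hN h3 h4, sigA_mid s (by omega) (by omega)]
    omega
  · rw [sigA_fix s hN h4, sigA_fix s hN h4]

theorem sigA_lt (s : St) {N N' : ℕ} (hN : s.m ≤ N) (hN' : 2 * N ≤ N') {i : ℕ}
    (h : i < N') : sigA s N i < N' := by
  rw [sigA]
  split_ifs with h1 h2
  · omega
  · omega
  · by_cases h3 : i < s.m
    · have := s.lt i h3; omega
    · rw [s.fix i (le_of_not_gt h3)]; omega

/-- The A-mode operator. -/
noncomputable def opA (s : St) {N : ℕ} (hN : s.m ≤ N) : Hs →L[ℂ] Hs :=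
  Op (sigA_inv s hN) one_bound

theorem opA_sa (s : St) {N : ℕ} (hN : s.m ≤ N) : IsSelfAdjoint (opA s hN) :=
  Op_selfAdjoint (sigA_inv s hN) one_bound (fun _ => map_one _) (fun _ => rfl)

theorem opA_spectrum (s : St) {N : ℕ} (hN : s.m ≤ N) :
    spectrum ℂ (opA s hN) ⊆ {-1, 1} :=
  spectrum_subset_of_sq_one (Op_sq (sigA_inv s hN))

/-- The next B-state. -/
def stB (s : St) {N N' : ℕ} (hN : s.m ≤ N) (hN' : 2 * N ≤ N') : St :=
  ⟨sigA s N, N', sigA_inv s hN,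
    fun i hi => sigA_fix s hN (le_trans hN' hi),
    fun i hi => sigA_lt s hN hN' hi⟩

end SCI

namespace SCI

theorem matEntry_opB (s : St) (i j : ℕ) :
    matEntry s.op i j = cB s.m i * (if s.f i = j then 1 else 0) := by
  rw [St.op, matEntry_op, cB_conj]

theorem matEntry_opA (s : St) {N : ℕ} (hN : s.m ≤ N) (i j : ℕ) :
    matEntry (opA s hN) i j = (if sigA s N i = j then 1 else 0) := by
  rw [opA, matEntry_op, map_one, one_mul]

open Filter Metric TopologicalSpace

/-- Bundle of the hypothetical tower of arithmetic algorithms. -/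
structure Ctx where
  G : ℕ → {H : Hs →L[ℂ] Hs // IsSelfAdjoint H} → NonemptyCompacts ℂ
  hdet : ∀ (n : ℕ) (A : {H : Hs →L[ℂ] Hs // IsSelfAdjoint H}),
    ∃ S : Finset (ℕ × ℕ), ∀ B : {H : Hs →L[ℂ] Hs // IsSelfAdjoint H},
      (∀ p ∈ S, matEntry B.1 p.1 p.2 = matEntry A.1 p.1 p.2) → G n B = G n A
  hconv : ∀ H : {H : Hs →L[ℂ] Hs // IsSelfAdjoint H},
    Filter.Tendsto (fun n => Metric.hausdorffDist (G n H : Set ℂ) (spectrum ℂ H.1))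
      Filter.atTop (nhds 0)

namespace Ctx

variable (C : Ctx)

theorem pick_exists (X : {H : Hs →L[ℂ] Hs // IsSelfAdjoint H}) (k : ℕ) :
    ∃ n, k ≤ n ∧ Metric.hausdorffDist (C.G n X : Set ℂ) (spectrum ℂ X.1) < 1/8 := by
  have h2 : ∀ᶠ n in atTop,
      Metric.hausdorffDist (C.G n X : Set ℂ) (spectrum ℂ X.1) < 1/8 :=
    (C.hconv X).eventually (gt_mem_nhds (by norm_num))
  obtain ⟨n, hn1, hn2⟩ := ((eventually_ge_atTop k).and h2).exists
  exact ⟨n, hn1, hn2⟩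

noncomputable def pickN (X : {H : Hs →L[ℂ] Hs // IsSelfAdjoint H}) (k : ℕ) : ℕ :=
  (C.pick_exists X k).choose

theorem pickN_ge (X) (k : ℕ) : k ≤ C.pickN X k :=
  (C.pick_exists X k).choose_spec.1

theorem pickN_lt (X) (k : ℕ) :
    Metric.hausdorffDist (C.G (C.pickN X k) X : Set ℂ) (spectrum ℂ X.1) < 1/8 :=
  (C.pick_exists X k).choose_spec.2

noncomputable def pickS (n : ℕ) (X : {H : Hs →L[ℂ] Hs // IsSelfAdjoint H}) :
    Finset (ℕ × ℕ) := (C.hdet n X).choose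

theorem pickS_spec (n : ℕ) (X) :
    ∀ B : {H : Hs →L[ℂ] Hs // IsSelfAdjoint H},
      (∀ p ∈ C.pickS n X, matEntry B.1 p.1 p.2 = matEntry X.1 p.1 p.2) →
        C.G n B = C.G n X := (C.hdet n X).choose_spec

end Ctx

def bnd (S : Finset (ℕ × ℕ)) : ℕ := S.sup (fun p => max p.1 p.2) + 1

theorem lt_bnd {S : Finset (ℕ × ℕ)} {p : ℕ × ℕ} (h : p ∈ S) :
    p.1 < bnd S ∧ p.2 < bnd S := by
  have h2 := Finset.le_sup (f := fun p : ℕ × ℕ => max p.1 p.2) h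
  simp only [le_max_iff, max_le_iff] at h2
  have h3 : max p.1 p.2 ≤ S.sup (fun p : ℕ × ℕ => max p.1 p.2) :=
    Finset.le_sup (f := fun p : ℕ × ℕ => max p.1 p.2) h
  rw [bnd]
  constructor <;> omega

/-- The initial state. -/
def st0 : St := ⟨id, 0, fun _ => rfl, fun _ _ => rfl, fun i h => absurd h (Nat.not_lt_zero i)⟩

namespace Ctx

variable (C : Ctx)

noncomputable def Xb (s : St) : {H : Hs →L[ℂ] Hs // IsSelfAdjoint H} := ⟨s.op, s.sa⟩

noncomputable def n1 (s : St) : ℕ := C.pickN (Xb s) s.m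

noncomputable def N1 (s : St) : ℕ :=
  max (s.m + 1) (bnd (C.pickS (C.n1 s) (Xb s)))

theorem hN1 (s : St) : s.m ≤ C.N1 s :=
  le_trans (Nat.le_succ _) (le_max_left _ _)

noncomputable def Ya (s : St) : {H : Hs →L[ℂ] Hs // IsSelfAdjoint H} :=
  ⟨opA s (C.hN1 s), opA_sa s _⟩

noncomputable def n2 (s : St) : ℕ := C.pickN (C.Ya s) s.m

noncomputable def N2 (s : St) : ℕ :=
  max (2 * C.N1 s + 1) (bnd (C.pickS (C.n2 s) (C.Ya s)))

theorem hN2 (s : St) : 2 * C.N1 s ≤ C.N2 s :=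
  le_trans (Nat.le_succ _) (le_max_left _ _)

noncomputable def step (s : St) : St := stB s (C.hN1 s) (C.hN2 s)

noncomputable def stage : ℕ → St :=
  fun k => Nat.rec st0 (fun _ s => C.step s) k

theorem stage_succ (k : ℕ) : C.stage (k + 1) = C.step (C.stage k) := rfl

theorem step_f (s : St) : (C.step s).f = sigA s (C.N1 s) := rfl

theorem step_m (s : St) : (C.step s).m = C.N2 s := rfl

theorem step_m_lt (s : St) : s.m < (C.step s).m := by
  rw [C.step_m]
  have h2 := C.hN2 s
  have h3 : s.m + 1 ≤ C.N1 s := le_max_left _ _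
  omega

theorem stage_m_ge (k : ℕ) : k ≤ (C.stage k).m := by
  induction k with
  | zero => exact Nat.zero_le _
  | succ k ih =>
    have := C.step_m_lt (C.stage k)
    rw [C.stage_succ]
    omega

theorem stage_m_mono {k l : ℕ} (h : k ≤ l) : (C.stage k).m ≤ (C.stage l).m := by
  induction l with
  | zero => have : k = 0 := by omega
            subst this; rfl
  | succ l ih =>
    rcases Nat.lt_or_ge k (l+1) with h2 | h2
    · have h4 := C.step_m_lt (C.stage l)
      rw [C.stage_succ]
      have := ih (by omega)
      omega
    · have : k = l + 1 := by omega
      subst this; rfl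

theorem stage_f_agree {k l : ℕ} (h : k ≤ l) {i : ℕ} (hi : i < (C.stage k).m) :
    (C.stage l).f i = (C.stage k).f i := by
  induction l with
  | zero => have : k = 0 := by omega
            subst this; rfl
  | succ l ih =>
    rcases Nat.lt_or_ge k (l+1) with h2 | h2
    · have h3 : k ≤ l := by omega
      rw [C.stage_succ, C.step_f, sigA_low _ (lt_of_lt_of_le hi (C.stage_m_mono h3))]
      exact ih h3
    · have : k = l + 1 := by omega
      subst this; rfl

noncomputable def fstar : ℕ → ℕ := fun i => (C.stage (i + 1)).f i

theorem fstar_eq {k i : ℕ} (hi : i < (C.stage k).m) :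
    C.fstar i = (C.stage k).f i := by
  have hi1 : i < (C.stage (i+1)).m :=
    lt_of_lt_of_le (Nat.lt_succ_self i) (C.stage_m_ge (i+1))
  rcases le_total k (i+1) with h | h
  · exact C.stage_f_agree h hi
  · exact (C.stage_f_agree h hi1).symm

theorem fstar_inv : Function.Involutive C.fstar := by
  intro i
  have him : i < (C.stage (i+1)).m :=
    lt_of_lt_of_le (Nat.lt_succ_self i) (C.stage_m_ge (i+1))
  have hj : (C.stage (i+1)).f i < (C.stage (i+1)).m := (C.stage (i+1)).lt i him
  have h1 : C.fstar i = (C.stage (i+1)).f i := rfl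
  rw [h1, C.fstar_eq hj]
  exact (C.stage (i+1)).inv i

noncomputable def xstar : Hs →L[ℂ] Hs := Op C.fstar_inv one_bound

noncomputable def Xstar : {H : Hs →L[ℂ] Hs // IsSelfAdjoint H} :=
  ⟨C.xstar, Op_selfAdjoint C.fstar_inv one_bound (fun _ => map_one _) (fun _ => rfl)⟩

theorem matEntry_xstar (i j : ℕ) :
    matEntry C.xstar i j = (if C.fstar i = j then 1 else 0) := by
  rw [xstar, matEntry_op, map_one, one_mul]

end Ctx

end SCI

namespace SCI

open Filter Metric TopologicalSpace

instance : Nontrivial (Hs →L[ℂ] Hs) := by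
  refine nontrivial_of_ne 1 0 (fun h => ?_)
  have h1 : (1 : Hs →L[ℂ] Hs) (eVec 0) = (0 : Hs →L[ℂ] Hs) (eVec 0) := by rw [h]
  simp only [ContinuousLinearMap.one_apply, ContinuousLinearMap.zero_apply] at h1
  exact eVec_ne_zero 0 h1

namespace Ctx

variable (C : Ctx)

theorem entry_star_B (k : ℕ) {i j : ℕ} (hi : i < C.N1 (C.stage k))
    (hj : j < C.N1 (C.stage k)) :
    matEntry C.xstar i j = matEntry (C.stage k).op i j := by
  set s := C.stage k with hs
  rcases lt_or_ge i s.m with h | h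
  · rw [C.matEntry_xstar, matEntry_opB, C.fstar_eq (k := k) h, cB, if_pos h, one_mul]
  · have him : i < (C.stage (k+1)).m := by
      have h2 := C.hN2 s
      have h3 : (C.stage (k+1)).m = C.N2 s := by rw [hs]; rfl
      omega
    have hf : C.fstar i = i + C.N1 s := by
      rw [C.fstar_eq him, C.stage_succ, C.step_f, sigA_mid s h hi]
    rw [C.matEntry_xstar, hf, matEntry_opB, cB, if_neg (not_lt.2 h), zero_mul,
      if_neg (by omega)]

theorem entry_star_A (k : ℕ) {i j : ℕ} (hi : i < C.N2 (C.stage k)) :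
    matEntry C.xstar i j = matEntry (opA (C.stage k) (C.hN1 (C.stage k))) i j := by
  have him : i < (C.stage (k+1)).m := by rw [C.stage_succ, C.step_m]; exact hi
  have hf : C.fstar i = sigA (C.stage k) (C.N1 (C.stage k)) i := by
    rw [C.fstar_eq him, C.stage_succ, C.step_f]
  rw [C.matEntry_xstar, matEntry_opA, hf]

theorem gammaB (k : ℕ) :
    C.G (C.n1 (C.stage k)) C.Xstar = C.G (C.n1 (C.stage k)) (Xb (C.stage k)) := by
  apply C.pickS_spec _ _ C.Xstar
  intro p hp
  obtain ⟨h1, h2⟩ := lt_bnd hp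
  have hb : bnd (C.pickS (C.n1 (C.stage k)) (Xb (C.stage k))) ≤ C.N1 (C.stage k) :=
    le_max_right _ _
  exact C.entry_star_B k (by omega) (by omega)

theorem gammaA (k : ℕ) :
    C.G (C.n2 (C.stage k)) C.Xstar = C.G (C.n2 (C.stage k)) (C.Ya (C.stage k)) := by
  apply C.pickS_spec _ _ C.Xstar
  intro p hp
  obtain ⟨h1, h2⟩ := lt_bnd hp
  have hb : bnd (C.pickS (C.n2 (C.stage k)) (C.Ya (C.stage k))) ≤ C.N2 (C.stage k) :=
    le_max_right _ _
  exact C.entry_star_A k (by omega)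

theorem contradiction (C : Ctx) : False := by
  -- the spectrum of the limit operator
  set K : Set ℂ := spectrum ℂ C.xstar with hK
  have hKne : K.Nonempty := spectrum.nonempty _
  have hKb : Bornology.IsBounded K := (spectrum.isCompact _).isBounded
  -- pick a stage beyond which Γ n Xstar is 1/8-close to K
  have hev : ∀ᶠ n in atTop,
      Metric.hausdorffDist (C.G n C.Xstar : Set ℂ) K < 1/8 :=
    (C.hconv C.Xstar).eventually (gt_mem_nhds (by norm_num))
  obtain ⟨k₀, hk₀⟩ := eventually_atTop.1 hev
  set s := C.stage k₀ with hs
  have hsm : k₀ ≤ s.m := C.stage_m_ge k₀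
  -- B data
  set A1 : Set ℂ := (C.G (C.n1 s) (Xb s) : Set ℂ) with hA1
  have hA1ne : A1.Nonempty := (C.G (C.n1 s) (Xb s)).nonempty
  have hA1b : Bornology.IsBounded A1 := (C.G (C.n1 s) (Xb s)).isCompact.isBounded
  set SB : Set ℂ := spectrum ℂ s.op with hSB
  have hSBne : SB.Nonempty := spectrum.nonempty _
  have hSBb : Bornology.IsBounded SB := (spectrum.isCompact _).isBounded
  have e3 : Metric.hausdorffDist A1 SB < 1/8 := C.pickN_lt (Xb s) s.m
  have e1 : Metric.hausdorffDist A1 K < 1/8 := by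
    rw [hA1, ← C.gammaB k₀]
    exact hk₀ _ (le_trans hsm (C.pickN_ge (Xb s) s.m))
  have h0SB : (0 : ℂ) ∈ SB := s.zero_mem
  -- infDist 0 K < 1/4
  have d1 : Metric.infDist (0 : ℂ) A1 ≤ Metric.hausdorffDist SB A1 := by
    have := Metric.infDist_le_infDist_add_hausdorffDist (x := (0:ℂ)) (s := SB) (t := A1)
      (Metric.hausdorffEdist_ne_top_of_nonempty_of_bounded hSBne hA1ne hSBb hA1b)
    rwa [Metric.infDist_zero_of_mem h0SB, zero_add] at this
  have d2 : Metric.infDist (0 : ℂ) K ≤ Metric.infDist (0:ℂ) A1 + Metric.hausdorffDist A1 K :=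
    Metric.infDist_le_infDist_add_hausdorffDist
      (Metric.hausdorffEdist_ne_top_of_nonempty_of_bounded hA1ne hKne hA1b hKb)
  have d3 : Metric.infDist (0 : ℂ) K < 1/4 := by
    have := Metric.hausdorffDist_comm (s := A1) (t := SB)
    calc Metric.infDist (0 : ℂ) K ≤ Metric.infDist (0:ℂ) A1 + Metric.hausdorffDist A1 K := d2
      _ ≤ Metric.hausdorffDist SB A1 + Metric.hausdorffDist A1 K := by linarith [d1]
      _ < 1/8 + 1/8 := by rw [Metric.hausdorffDist_comm (s := SB)] ; exact add_lt_add e3 e1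
      _ = 1/4 := by norm_num
  obtain ⟨p, hpK, hp⟩ := (Metric.infDist_lt_iff hKne).1 d3
  -- A data
  set A2 : Set ℂ := (C.G (C.n2 s) (C.Ya s) : Set ℂ) with hA2
  have hA2ne : A2.Nonempty := (C.G (C.n2 s) (C.Ya s)).nonempty
  have hA2b : Bornology.IsBounded A2 := (C.G (C.n2 s) (C.Ya s)).isCompact.isBounded
  set SA : Set ℂ := spectrum ℂ (C.Ya s).1 with hSA
  have hSAne : SA.Nonempty := spectrum.nonempty _
  have hSAb : Bornology.IsBounded SA := (spectrum.isCompact _).isBounded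
  have f3 : Metric.hausdorffDist A2 SA < 1/8 := C.pickN_lt (C.Ya s) s.m
  have f1 : Metric.hausdorffDist A2 K < 1/8 := by
    rw [hA2, ← C.gammaA k₀]
    exact hk₀ _ (le_trans hsm (C.pickN_ge (C.Ya s) s.m))
  have g1 : Metric.infDist p A2 ≤ Metric.hausdorffDist K A2 := by
    have := Metric.infDist_le_infDist_add_hausdorffDist (x := p) (s := K) (t := A2)
      (Metric.hausdorffEdist_ne_top_of_nonempty_of_bounded hKne hA2ne hKb hA2b)
    rwa [Metric.infDist_zero_of_mem hpK, zero_add] at this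
  have g2 : Metric.infDist p SA ≤ Metric.infDist p A2 + Metric.hausdorffDist A2 SA :=
    Metric.infDist_le_infDist_add_hausdorffDist
      (Metric.hausdorffEdist_ne_top_of_nonempty_of_bounded hA2ne hSAne hA2b hSAb)
  have g3 : Metric.infDist p SA < 1/4 := by
    calc Metric.infDist p SA ≤ Metric.infDist p A2 + Metric.hausdorffDist A2 SA := g2
      _ ≤ Metric.hausdorffDist K A2 + Metric.hausdorffDist A2 SA := by linarith [g1]
      _ < 1/8 + 1/8 := by rw [Metric.hausdorffDist_comm (s := K)]; exact add_lt_add f1 f3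
      _ = 1/4 := by norm_num
  obtain ⟨q, hqSA, hq⟩ := (Metric.infDist_lt_iff hSAne).1 g3
  have hq1 : q ∈ ({-1, 1} : Set ℂ) := opA_spectrum s (C.hN1 s) hqSA
  have hqn : ‖q‖ = 1 := by
    simp only [Set.mem_insert_iff, Set.mem_singleton_iff] at hq1
    rcases hq1 with h | h <;> subst h <;> simp
  have : (1:ℝ) < 1/2 := by
    calc (1:ℝ) = ‖q‖ := hqn.symm
      _ = dist (0:ℂ) q := by rw [dist_zero_left]
      _ ≤ dist (0:ℂ) p + dist p q := dist_triangle _ _ _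
      _ < 1/4 + 1/4 := add_lt_add hp hq
      _ = 1/2 := by norm_num
  norm_num at this

end Ctx

end SCI

/-- There is no sequence of finitely-determined maps from the bounded self-adjoint
operators on `ℓ²(ℕ)` to the nonempty compact subsets of `ℂ` converging, in Hausdorff
distance, to the spectrum on every input. -/
theorem stmt0 :
    ¬ ∃ Γ : ℕ → {H : lp (fun _ : ℕ => ℂ) 2 →L[ℂ] lp (fun _ : ℕ => ℂ) 2 // IsSelfAdjoint H} →
        TopologicalSpace.NonemptyCompacts ℂ,
      (∀ (n : ℕ) (A : {H : lp (fun _ : ℕ => ℂ) 2 →L[ℂ] lp (fun _ : ℕ => ℂ) 2 // IsSelfAdjoint H}),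
        ∃ S : Finset (ℕ × ℕ),
          ∀ B : {H : lp (fun _ : ℕ => ℂ) 2 →L[ℂ] lp (fun _ : ℕ => ℂ) 2 // IsSelfAdjoint H},
            (∀ p ∈ S, matEntry B.1 p.1 p.2 = matEntry A.1 p.1 p.2) → Γ n B = Γ n A) ∧
      (∀ H : {H : lp (fun _ : ℕ => ℂ) 2 →L[ℂ] lp (fun _ : ℕ => ℂ) 2 // IsSelfAdjoint H},
        Filter.Tendsto (fun n => Metric.hausdorffDist (Γ n H : Set ℂ) (spectrum ℂ H.1))
          Filter.atTop (nhds 0)) := by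
  rintro ⟨Γ, hdet, hconv⟩
  exact SCI.Ctx.contradiction ⟨Γ, hdet, hconv⟩
end

section
/- There is no sequence (Γ_n)_{n∈ℕ} of maps from the class Ω_td of bounded operators on ℓ²(ℕ) that are tridiagonal with respect to the canonical basis (i.e. ⟨H e_j, e_i⟩ = 0 whenever |i−j| > 1) into the space of nonempty compact subsets of ℂ such that both: (i) each Γ_n has the finite-determination property, i.e. for every A ∈ Ω_td there exists a finite set S ⊆ ℕ×ℕ such that every B ∈ Ω_td whose matrix entries satisfy ⟨B e_j, e_i⟩ = ⟨A e_j, e_i⟩ for all (i,j) ∈ S necessarily satisfies Γ_n(B) = Γ_n(A); and (ii) for every H ∈ Ω_td, the sets Γ_n(H) converge to the spectrum Sp(H) in the Hausdorff metric as n → ∞. -/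
open scoped InnerProductSpace

/-- A bounded operator on `ℓ²(ℕ)` is tridiagonal w.r.t. the canonical basis if its
matrix entries vanish whenever `|i - j| > 1`. -/
def Tridiagonal (H : lp (fun _ : ℕ => ℂ) 2 →L[ℂ] lp (fun _ : ℕ => ℂ) 2) : Prop :=
  ∀ i j : ℕ, 1 < |(i : ℤ) - (j : ℤ)| → matEntry H i j = 0


noncomputable section
namespace S1
open scoped ENNReal

abbrev E2 : Type := lp (fun _ : ℕ => ℂ) 2

def shf (w : ℕ → ℂ) (x : ℕ → ℂ) : ℕ → ℂ := fun i => Nat.casesOn i 0 fun j => w j * x j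

lemma toReal2 : (2 : ℝ≥0∞).toReal = 2 := by simp

lemma summable_sq (x : E2) : Summable fun i => ‖(x : ℕ → ℂ) i‖ ^ (2:ℝ) := by
  have := (lp.memℓp x).summable (p := 2) (by rw [toReal2]; norm_num)
  simpa [toReal2] using this

lemma memℓp_shf (w : ℕ → ℂ) (hw : ∀ j, ‖w j‖ ≤ 1) (x : E2) : Memℓp (shf w x) 2 := by
  apply memℓp_gen
  rw [toReal2]
  have h1 : Summable fun j => ‖w j * x j‖ ^ (2:ℝ) := by
    refine Summable.of_nonneg_of_le (fun j => by positivity) (fun j => ?_) (summable_sq x)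
    have : ‖w j * x j‖ ≤ ‖x j‖ := by
      calc ‖w j * x j‖ = ‖w j‖ * ‖x j‖ := norm_mul _ _
      _ ≤ 1 * ‖x j‖ := by gcongr; exact hw j
      _ = ‖x j‖ := one_mul _
    exact Real.rpow_le_rpow (norm_nonneg _) this (by norm_num)
  have := (summable_nat_add_iff (f := fun i => ‖shf w x i‖ ^ (2:ℝ)) 1).mp ?_
  · exact this
  · simpa [shf] using h1

/-- The weighted shift as an element of lp, given `x : E2`. -/
def shEl (w : ℕ → ℂ) (hw : ∀ j, ‖w j‖ ≤ 1) (x : E2) : E2 := ⟨shf w x, memℓp_shf w hw x⟩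

@[simp] lemma shEl_apply (w : ℕ → ℂ) (hw : ∀ j, ‖w j‖ ≤ 1) (x : E2) (i : ℕ) :
    (shEl w hw x : ℕ → ℂ) i = shf w (x : ℕ → ℂ) i := rfl

lemma shEl_norm_le (w : ℕ → ℂ) (hw : ∀ j, ‖w j‖ ≤ 1) (x : E2) : ‖shEl w hw x‖ ≤ ‖x‖ := by
  apply lp.norm_le_of_tsum_le (by rw [toReal2]; norm_num) (norm_nonneg x)
  rw [toReal2]
  have hs : Summable fun i => ‖(shEl w hw x : ℕ → ℂ) i‖ ^ (2:ℝ) := by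
    have := (lp.memℓp (shEl w hw x)).summable (p := 2) (by rw [toReal2]; norm_num)
    simpa [toReal2] using this
  have key : ∑' i, ‖(shEl w hw x : ℕ → ℂ) i‖ ^ (2:ℝ)
      = ∑' j, ‖w j * x j‖ ^ (2:ℝ) := by
    rw [Summable.tsum_eq_zero_add hs]
    simp [shf]
  rw [key]
  have hle : ∑' j, ‖w j * x j‖ ^ (2:ℝ) ≤ ∑' j, ‖(x : ℕ → ℂ) j‖ ^ (2:ℝ) := by
    apply Summable.tsum_le_tsum _ _ (summable_sq x)
    · intro j
      apply Real.rpow_le_rpow (norm_nonneg _) _ (by norm_num)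
      calc ‖w j * x j‖ = ‖w j‖ * ‖x j‖ := norm_mul _ _
      _ ≤ 1 * ‖x j‖ := by gcongr; exact hw j
      _ = ‖x j‖ := one_mul _
    · refine Summable.of_nonneg_of_le (fun j => by positivity) (fun j => ?_) (summable_sq x)
      apply Real.rpow_le_rpow (norm_nonneg _) _ (by norm_num)
      calc ‖w j * x j‖ = ‖w j‖ * ‖x j‖ := norm_mul _ _
      _ ≤ 1 * ‖x j‖ := by gcongr; exact hw j
      _ = ‖x j‖ := one_mul _
  refine hle.trans ?_
  have := lp.norm_rpow_eq_tsum (p := 2) (by rw [toReal2]; norm_num) x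
  rw [toReal2] at this
  rw [← this]

/-- The weighted shift operator. -/
def shOp (w : ℕ → ℂ) (hw : ∀ j, ‖w j‖ ≤ 1) : E2 →L[ℂ] E2 :=
  LinearMap.mkContinuous
    { toFun := shEl w hw
      map_add' := by
        intro x y; apply lp.ext; funext i
        cases i with
        | zero => simp [shf]
        | succ j => simp [shf, mul_add]
      map_smul' := by
        intro c x; apply lp.ext; funext i
        cases i with
        | zero => simp [shf]
        | succ j => simp [shf]; ring }
    1 (fun x => by simpa using shEl_norm_le w hw x)

@[simp] lemma shOp_apply (w : ℕ → ℂ) (hw : ∀ j, ‖w j‖ ≤ 1) (x : E2) (i : ℕ) :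
    (shOp w hw x : ℕ → ℂ) i = shf w (x : ℕ → ℂ) i := rfl


lemma matEntry_eq (A : E2 →L[ℂ] E2) (i j : ℕ) :
    matEntry A i j = (starRingEnd ℂ) ((A (eVec j) : ℕ → ℂ) i) := by
  rw [matEntry]
  simp only [eVec]
  rw [lp.inner_single_right]
  simp [inner]

lemma shf_eVec (w : ℕ → ℂ) (j i : ℕ) :
    shf w ((eVec j : E2) : ℕ → ℂ) i = if i = j + 1 then w j else 0 := by
  cases i with
  | zero => simp [shf]
  | succ k =>
    simp only [shf, eVec]
    by_cases h : k = j
    · subst h; rw [lp.single_apply_self, if_pos rfl, mul_one]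
    · rw [lp.single_apply_ne 2 j 1 h, if_neg (by omega), mul_zero]

lemma matEntry_shOp (w : ℕ → ℂ) (hw : ∀ j, ‖w j‖ ≤ 1) (i j : ℕ) :
    matEntry (shOp w hw) i j = if i = j + 1 then (starRingEnd ℂ) (w j) else 0 := by
  rw [matEntry_eq, shOp_apply, shf_eVec]
  split_ifs <;> simp

lemma trid_shOp (w : ℕ → ℂ) (hw : ∀ j, ‖w j‖ ≤ 1) : Tridiagonal (shOp w hw) := by
  intro i j h
  rw [matEntry_shOp]
  rcases lt_abs.mp h with h' | h' <;> rw [if_neg (by omega)]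

lemma shOp_pow_coord (w : ℕ → ℂ) (hw : ∀ j, ‖w j‖ ≤ 1) :
    ∀ (k : ℕ) (x : E2) (i : ℕ), (((shOp w hw) ^ k) x : ℕ → ℂ) i ≠ 0 →
      k ≤ i ∧ ∀ t, i - k ≤ t → t < i → w t ≠ 0 := by
  intro k
  induction k with
  | zero => intro x i h; exact ⟨Nat.zero_le _, fun t ht ht' => by omega⟩
  | succ k ih =>
    intro x i h
    have hco : (((shOp w hw) ^ (k+1)) x : ℕ → ℂ) i
        = shf w ((((shOp w hw) ^ k) x : E2) : ℕ → ℂ) i := by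
      rw [pow_succ']
      rfl
    rw [hco] at h
    cases i with
    | zero => exact absurd rfl h
    | succ m =>
      have h1 : w m ≠ 0 ∧ (((shOp w hw) ^ k) x : ℕ → ℂ) m ≠ 0 := by
        by_contra hc
        push_neg at hc
        simp only [shf] at h
        rcases em (w m = 0) with h0 | h0
        · rw [h0, zero_mul] at h; exact h rfl
        · rw [hc h0, mul_zero] at h; exact h rfl
      obtain ⟨hk, hall⟩ := ih x m h1.2
      refine ⟨by omega, fun t ht ht' => ?_⟩
      rcases em (t = m) with rfl | hne
      · exact h1.1
      · exact hall t (by omega) (by omega)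

lemma shOp_nilpotent (w : ℕ → ℂ) (hw : ∀ j, ‖w j‖ ≤ 1) (N : ℕ)
    (hN : ∀ j, N ≤ j → w j = 0) : (shOp w hw) ^ (N + 1) = 0 := by
  refine ContinuousLinearMap.ext fun x => ?_
  rw [ContinuousLinearMap.zero_apply]
  apply lp.ext
  funext i
  rw [lp.coeFn_zero, Pi.zero_apply]
  by_contra h
  obtain ⟨hk, hall⟩ := shOp_pow_coord w hw (N+1) x i h
  exact hall (i-1) (by omega) (by omega) (hN (i-1) (by omega))

instance : Nontrivial E2 := by
  refine ⟨eVec 0, 0, fun h => ?_⟩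
  have h0 : ((eVec 0 : E2) : ℕ → ℂ) 0 = 1 := lp.single_apply_self (E := fun _ : ℕ => ℂ) 2 0 (1 : ℂ)
  rw [h] at h0
  rw [lp.coeFn_zero, Pi.zero_apply] at h0
  exact zero_ne_one h0

instance : Nontrivial (E2 →L[ℂ] E2) := by
  refine ⟨1, 0, fun h => ?_⟩
  have := congrArg (fun T : E2 →L[ℂ] E2 => T (eVec 0)) h
  simp only [ContinuousLinearMap.one_apply, ContinuousLinearMap.zero_apply] at this
  have h0 : ((eVec 0 : E2) : ℕ → ℂ) 0 = 1 := lp.single_apply_self (E := fun _ : ℕ => ℂ) 2 0 (1 : ℂ)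
  rw [this, lp.coeFn_zero, Pi.zero_apply] at h0
  exact zero_ne_one h0

lemma spectrum_eq_zero (A : E2 →L[ℂ] E2) (hA : IsNilpotent A) : spectrum ℂ A = {0} := by
  apply Set.eq_singleton_iff_nonempty_unique_mem.mpr
  refine ⟨spectrum.nonempty A, fun lam hlam => ?_⟩
  by_contra hne
  apply spectrum.notMem_iff.mpr _ hlam
  have h1 : IsUnit (algebraMap ℂ (E2 →L[ℂ] E2) lam + -A) := by
    apply IsNilpotent.isUnit_add_left_of_commute hA.neg
      (IsUnit.map (algebraMap ℂ (E2 →L[ℂ] E2)) (isUnit_iff_ne_zero.mpr hne))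
    exact (Algebra.commutes lam (-A)).symm
  rwa [sub_eq_add_neg]

/-- coordinates of approximate eigenvector -/
def xv (m k : ℕ) : ℕ → ℂ := fun i => if m ≤ i ∧ i ≤ m + k then (1/2 : ℂ)^(m + k - i) else 0

lemma memℓp_xv (m k : ℕ) : Memℓp (xv m k) 2 := by
  refine (memℓp_zero ?_).of_exponent_ge zero_le
  apply (Set.finite_Iic (m + k)).subset
  intro i hi
  simp only [Set.mem_setOf_eq, xv] at hi
  by_contra hc
  simp only [Set.mem_Iic, not_le] at hc
  exact hi (by rw [if_neg (by omega)])

def xEl (m k : ℕ) : E2 := ⟨xv m k, memℓp_xv m k⟩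

lemma xEl_norm (m k : ℕ) : 1 ≤ ‖xEl m k‖ := by
  have h := lp.norm_apply_le_norm (E := fun _ : ℕ => ℂ) (p := 2) (by norm_num) (xEl m k) (m + k)
  have h2 : ((xEl m k : E2) : ℕ → ℂ) (m + k) = 1 := by
    show xv m k (m + k) = 1
    rw [xv, if_pos ⟨by omega, le_refl _⟩]
    simp
  rw [h2] at h
  simpa using h

lemma shf_xv (w : ℕ → ℂ) (m k : ℕ) (hones : ∀ j, m ≤ j → j < m + k → w j = 1)
    (hz : w (m + k) = 0) (i : ℕ) :
    shf w (xv m k) i = if m + 1 ≤ i ∧ i ≤ m + k then (1/2 : ℂ)^(m + k + 1 - i) else 0 := by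
  cases i with
  | zero =>
    show (0 : ℂ) = _
    rw [if_neg (by omega)]
  | succ j =>
    show w j * xv m k j = _
    rw [xv]
    rcases em (m ≤ j ∧ j ≤ m + k) with h | h
    · rw [if_pos h]
      rcases em (j = m + k) with rfl | hne
      · rw [hz, zero_mul, if_neg (by omega)]
      · rw [hones j h.1 (by omega), one_mul, if_pos (by omega)]
        congr 1
        omega
    · rw [if_neg h, mul_zero, if_neg (by omega)]

lemma U_xEl (w : ℕ → ℂ) (hw : ∀ j, ‖w j‖ ≤ 1) (m k : ℕ)
    (hones : ∀ j, m ≤ j → j < m + k → w j = 1) (hz : w (m + k) = 0) :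
    (algebraMap ℂ (E2 →L[ℂ] E2) (1/2) - shOp w hw) (xEl m k)
      = ((1/2 : ℂ)^(k+1)) • eVec m := by
  apply lp.ext
  funext i
  have hL : (((algebraMap ℂ (E2 →L[ℂ] E2) (1/2) - shOp w hw) (xEl m k) : E2) : ℕ → ℂ) i
      = (1/2 : ℂ) * xv m k i - shf w (xv m k) i := by
    rw [ContinuousLinearMap.sub_apply, Algebra.algebraMap_eq_smul_one,
      ContinuousLinearMap.smul_apply, ContinuousLinearMap.one_apply,
      lp.coeFn_sub, Pi.sub_apply, lp.coeFn_smul, Pi.smul_apply]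
    rfl
  have hR : ((((1/2 : ℂ)^(k+1)) • eVec m : E2) : ℕ → ℂ) i
      = (1/2 : ℂ)^(k+1) * (if i = m then 1 else 0) := by
    rw [lp.coeFn_smul, Pi.smul_apply, smul_eq_mul]
    congr 1
    by_cases hme : i = m
    · rw [if_pos hme, hme]; exact lp.single_apply_self (E := fun _ : ℕ => ℂ) 2 m (1 : ℂ)
    · rw [if_neg hme]; exact lp.single_apply_ne (E := fun _ : ℕ => ℂ) 2 m (1 : ℂ) hme
  rw [hL, hR, shf_xv w m k hones hz i, xv]
  by_cases hne : i = m
  · subst hne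
    rw [if_pos ⟨le_refl _, by omega⟩, if_neg (by omega), if_pos rfl]
    have : i + k - i = k := by omega
    rw [this, mul_one, ← pow_succ']
    ring
  · rw [if_neg hne]
    rcases em (m + 1 ≤ i ∧ i ≤ m + k) with h | h
    · rw [if_pos (by omega), if_pos h, mul_zero]
      have : m + k + 1 - i = (m + k - i) + 1 := by omega
      rw [this, ← pow_succ']
      ring
    · rw [if_neg (by omega), if_neg h, mul_zero, mul_zero, sub_zero]

lemma norm_U_xEl (w : ℕ → ℂ) (hw : ∀ j, ‖w j‖ ≤ 1) (m k : ℕ)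
    (hones : ∀ j, m ≤ j → j < m + k → w j = 1) (hz : w (m + k) = 0) :
    ‖(algebraMap ℂ (E2 →L[ℂ] E2) (1/2) - shOp w hw) (xEl m k)‖ = (1/2 : ℝ)^(k+1) := by
  rw [U_xEl w hw m k hones hz, norm_smul]
  have h1 : ‖eVec m‖ = 1 := by
    have := lp.norm_single (E := fun _ : ℕ => ℂ) (p := 2) (by norm_num)
      m (1 : ℂ)
    simpa [eVec] using this
  rw [h1, mul_one, norm_pow]
  norm_num

lemma half_mem_spectrum (w : ℕ → ℂ) (hw : ∀ j, ‖w j‖ ≤ 1)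
    (hblocks : ∀ k, ∃ m, (∀ j, m ≤ j → j < m + k → w j = 1) ∧ w (m + k) = 0) :
    (1/2 : ℂ) ∈ spectrum ℂ (shOp w hw) := by
  by_contra h
  have hU : IsUnit (algebraMap ℂ (E2 →L[ℂ] E2) (1/2) - shOp w hw) := spectrum.notMem_iff.mp h
  obtain ⟨u, hu⟩ := hU
  set T : E2 →L[ℂ] E2 := ↑u⁻¹ with hT
  obtain ⟨k, hk⟩ := pow_unbounded_of_one_lt ‖T‖ (by norm_num : (1:ℝ) < 2)
  obtain ⟨m, hones, hz⟩ := hblocks k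
  have hfix : T ((↑u : E2 →L[ℂ] E2) (xEl m k)) = xEl m k := by
    have h1 : (T * ↑u : E2 →L[ℂ] E2) = 1 := u.inv_mul
    calc T ((↑u : E2 →L[ℂ] E2) (xEl m k)) = (T * ↑u : E2 →L[ℂ] E2) (xEl m k) := rfl
    _ = xEl m k := by rw [h1]; rfl
  have hnorm : ‖xEl m k‖ ≤ ‖T‖ * (1/2 : ℝ)^(k+1) := by
    calc ‖xEl m k‖ = ‖T ((↑u : E2 →L[ℂ] E2) (xEl m k))‖ := by rw [hfix]
    _ ≤ ‖T‖ * ‖(↑u : E2 →L[ℂ] E2) (xEl m k)‖ := T.le_opNorm _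
    _ = ‖T‖ * (1/2 : ℝ)^(k+1) := by rw [hu, norm_U_xEl w hw m k hones hz]
  have h1le := xEl_norm m k
  have hTnn : ‖T‖ * (1/2 : ℝ)^(k+1) < 2^k * (1/2:ℝ)^(k+1) := by
    apply mul_lt_mul_of_pos_right hk
    positivity
  have : (2:ℝ)^k * (1/2:ℝ)^(k+1) < 1 := by
    rw [pow_succ]
    rw [one_div, inv_pow, ← mul_assoc, mul_inv_cancel₀ (by positivity)]
    norm_num
  linarith

abbrev Op : Type := {H : lp (fun _ : ℕ => ℂ) 2 →L[ℂ] lp (fun _ : ℕ => ℂ) 2 // Tridiagonal H}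

lemma val_bound {w : ℕ → ℂ} (h : ∀ j, w j = 0 ∨ w j = 1) : ∀ j, ‖w j‖ ≤ 1 := fun j => by
  rcases h j with h' | h' <;> simp [h']

/-- state of the recursive construction -/
structure St where
  w : ℕ → ℂ
  M : ℕ
  n : ℕ
  hval : ∀ j, w j = 0 ∨ w j = 1
  hzero : ∀ j, M ≤ j → w j = 0

def opOf (s : St) : Op := ⟨shOp s.w (val_bound s.hval), trid_shOp _ _⟩

lemma spectrum_opOf (s : St) : spectrum ℂ (opOf s).1 = {0} := by
  apply spectrum_eq_zero
  exact ⟨s.M + 1, shOp_nilpotent s.w (val_bound s.hval) s.M s.hzero⟩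

lemma step_ex
    (Γ : ℕ → Op → TopologicalSpace.NonemptyCompacts ℂ)
    (hdet : ∀ (n : ℕ) (A : Op),
      ∃ S : Finset (ℕ × ℕ), ∀ B : Op,
        (∀ p ∈ S, matEntry B.1 p.1 p.2 = matEntry A.1 p.1 p.2) → Γ n B = Γ n A)
    (hconv : ∀ H : Op,
      Filter.Tendsto (fun n => Metric.hausdorffDist (Γ n H : Set ℂ) (spectrum ℂ H.1))
        Filter.atTop (nhds 0))
    (s : St) :
    ∃ s' : St,
      (∀ j, j < s.M → s'.w j = s.w j) ∧ s.M < s'.M ∧ s.n < s'.n ∧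
      (∃ m t, s.M ≤ t ∧ m + t + 1 ≤ s'.M ∧
        (∀ j, m ≤ j → j < m + t → s'.w j = 1) ∧ s'.w (m + t) = 0) ∧
      (∀ (w' : ℕ → ℂ) (hval' : ∀ j, w' j = 0 ∨ w' j = 1),
        (∀ j, j < s'.M → w' j = s'.w j) →
        ∀ z ∈ (Γ s'.n ⟨shOp w' (val_bound hval'), trid_shOp _ _⟩ : Set ℂ), ‖z‖ ≤ 1/4) := by
  classical
  -- choose n'
  have hc := (hconv (opOf s)).eventually (eventually_lt_nhds (by norm_num : (0:ℝ) < 1/8))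
  rw [Filter.eventually_atTop] at hc
  obtain ⟨N0, hN0⟩ := hc
  set n' : ℕ := max N0 (s.n + 1) with hn'
  have hdist : Metric.hausdorffDist (Γ n' (opOf s) : Set ℂ) (spectrum ℂ (opOf s).1) < 1/8 :=
    hN0 n' (le_max_left _ _)
  rw [spectrum_opOf] at hdist
  -- choose S
  obtain ⟨S, hS⟩ := hdet n' (opOf s)
  set N : ℕ := max s.M (S.sup (fun p => max p.1 p.2) + 1) with hN
  -- new weights
  set w' : ℕ → ℂ := fun j => if j < N then s.w j else if j < 2*N+1 then 1 else 0 with hw'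
  have hval' : ∀ j, w' j = 0 ∨ w' j = 1 := by
    intro j
    simp only [hw']
    split_ifs with h1 h2
    · exact s.hval j
    · right; rfl
    · left; rfl
  have hzero' : ∀ j, 2*N+2 ≤ j → w' j = 0 := by
    intro j hj
    simp only [hw']
    rw [if_neg (by omega), if_neg (by omega)]
  refine ⟨⟨w', 2*N+2, n', hval', hzero'⟩, ?_, ?_, ?_, ?_, ?_⟩
  · intro j hj
    simp only [hw']
    rw [if_pos (by omega)]
  · show s.M < 2*N+2
    have : s.M ≤ N := le_max_left _ _
    omega
  · show s.n < n'
    exact lt_of_lt_of_le (Nat.lt_succ_self s.n) (le_max_right _ _)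
  · refine ⟨N, N+1, ?_, ?_, ?_, ?_⟩
    · have : s.M ≤ N := le_max_left _ _
      omega
    · show N + (N+1) + 1 ≤ 2*N+2
      omega
    · intro j hj1 hj2
      show w' j = 1
      simp only [hw']
      rw [if_neg (by omega), if_pos (by omega)]
    · show w' (N + (N+1)) = 0
      simp only [hw']
      rw [if_neg (by omega), if_neg (by omega)]
  · intro w'' hval'' hagree z hz
    have hB : Γ n' ⟨shOp w'' (val_bound hval''), trid_shOp _ _⟩ = Γ n' (opOf s) := by
      apply hS
      intro p hp
      have hp2 : p.2 < N := by
        have h1 : max p.1 p.2 ≤ S.sup (fun p => max p.1 p.2) :=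
          Finset.le_sup (f := fun p : ℕ × ℕ => max p.1 p.2) hp
        have : p.2 ≤ max p.1 p.2 := le_max_right _ _
        omega
      show matEntry (shOp w'' (val_bound hval'')) p.1 p.2 = matEntry (opOf s).1 p.1 p.2
      rw [matEntry_shOp]
      rw [show (opOf s).1 = shOp s.w (val_bound s.hval) from rfl, matEntry_shOp]
      congr 1
      have h1 : w'' p.2 = w' p.2 := hagree p.2 (show p.2 < 2*N+2 by omega)
      have h2 : w' p.2 = s.w p.2 := by
        simp only [hw']; rw [if_pos hp2]
      rw [h1, h2]
    rw [hB] at hz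
    -- z is within 1/8 of {0}
    have hne : EMetric.hausdorffEdist (Γ n' (opOf s) : Set ℂ) (spectrum ℂ (opOf s).1) ≠ ⊤ := by
      apply Metric.hausdorffEdist_ne_top_of_nonempty_of_bounded
      · exact (Γ n' (opOf s)).nonempty
      · rw [spectrum_opOf]; exact Set.singleton_nonempty 0
      · exact (Γ n' (opOf s)).isCompact.isBounded
      · rw [spectrum_opOf]; exact Bornology.isBounded_singleton
    rw [spectrum_opOf] at hne
    have hinf := Metric.infDist_le_hausdorffDist_of_mem hz hne
    rw [Metric.infDist_singleton] at hinf
    have : dist z 0 < 1/8 := lt_of_le_of_lt hinf hdist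
    rw [dist_zero_right] at this
    linarith

end S1
end

open S1 in
/-- There is no sequence of finitely-determined maps from the bounded tridiagonal
operators on `ℓ²(ℕ)` to the nonempty compact subsets of `ℂ` converging, in Hausdorff
distance, to the spectrum on every input. -/
theorem stmt1 :
    ¬ ∃ Γ : ℕ → {H : lp (fun _ : ℕ => ℂ) 2 →L[ℂ] lp (fun _ : ℕ => ℂ) 2 // Tridiagonal H} →
        TopologicalSpace.NonemptyCompacts ℂ,
      (∀ (n : ℕ) (A : {H : lp (fun _ : ℕ => ℂ) 2 →L[ℂ] lp (fun _ : ℕ => ℂ) 2 // Tridiagonal H}),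
        ∃ S : Finset (ℕ × ℕ),
          ∀ B : {H : lp (fun _ : ℕ => ℂ) 2 →L[ℂ] lp (fun _ : ℕ => ℂ) 2 // Tridiagonal H},
            (∀ p ∈ S, matEntry B.1 p.1 p.2 = matEntry A.1 p.1 p.2) → Γ n B = Γ n A) ∧
      (∀ H : {H : lp (fun _ : ℕ => ℂ) 2 →L[ℂ] lp (fun _ : ℕ => ℂ) 2 // Tridiagonal H},
        Filter.Tendsto (fun n => Metric.hausdorffDist (Γ n H : Set ℂ) (spectrum ℂ H.1))
          Filter.atTop (nhds 0)) := by
  rintro ⟨Γ, hdet, hconv⟩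
  choose f hf using step_ex Γ hdet hconv
  set s0 : St := ⟨(fun _ => 0), 0, 0, fun _ => Or.inl rfl, fun _ _ => rfl⟩ with hs0
  set st : ℕ → St := fun k => f^[k] s0 with hstdef
  have hst : ∀ k, st (k+1) = f (st k) := fun k => Function.iterate_succ_apply' f k s0
  -- basic monotonicity facts
  have hMlt : ∀ k, (st k).M < (st (k+1)).M := by
    intro k; rw [hst]; exact (hf (st k)).2.1
  have hMmono : ∀ k k', k ≤ k' → (st k).M ≤ (st k').M := by
    intro k k' h
    induction k', h using Nat.le_induction with
    | base => exact le_refl _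
    | succ k' hk ih => exact le_trans ih (le_of_lt (hMlt k'))
  have hagree2 : ∀ k k', k ≤ k' → ∀ j, j < (st k).M → (st k').w j = (st k).w j := by
    intro k k' h
    induction k', h using Nat.le_induction with
    | base => intro j _; rfl
    | succ k' hk ih =>
      intro j hj
      rw [hst]
      rw [(hf (st k')).1 j (lt_of_lt_of_le hj (hMmono k k' hk))]
      exact ih j hj
  have hMk : ∀ k, k ≤ (st k).M := by
    intro k
    induction k with
    | zero => exact Nat.zero_le _
    | succ k ih => exact lt_of_le_of_lt ih (hMlt k)
  have hnk : ∀ k, k ≤ (st k).n := by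
    intro k
    induction k with
    | zero => exact Nat.zero_le _
    | succ k ih =>
      have := (hf (st k)).2.2.1
      rw [← hst] at this
      omega
  -- the limit weight sequence
  set winf : ℕ → ℂ := fun j => (st (j+1)).w j with hwinf
  have hvalinf : ∀ j, winf j = 0 ∨ winf j = 1 := fun j => (st (j+1)).hval j
  have hagreeinf : ∀ k j, j < (st k).M → winf j = (st k).w j := by
    intro k j hj
    rcases le_total k (j+1) with h | h
    · exact hagree2 k (j+1) h j hj
    · rw [hwinf]
      exact (hagree2 (j+1) k h j (lt_of_lt_of_le (Nat.lt_succ_self j) (hMk (j+1)))).symm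
  -- blocks of ones of arbitrary size
  have hblocks : ∀ k, ∃ m, (∀ j, m ≤ j → j < m + k → winf j = 1) ∧ winf (m + k) = 0 := by
    intro k
    obtain ⟨m, t, htM, hmt, hones, hzero⟩ := (hf (st k)).2.2.2.1
    rw [← hst] at hmt hones hzero
    have htk : k ≤ t := le_trans (hMk k) htM
    refine ⟨m + (t - k), ?_, ?_⟩
    · intro j hj1 hj2
      rw [hagreeinf (k+1) j (by omega)]
      exact hones j (by omega) (by omega)
    · have hmtk : m + (t - k) + k = m + t := by omega
      rw [hmtk, hagreeinf (k+1) (m+t) (by omega)]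
      exact hzero
  -- the bad operator
  set H : Op := ⟨shOp winf (val_bound hvalinf), trid_shOp _ _⟩ with hH
  have hhalf : (1/2 : ℂ) ∈ spectrum ℂ H.1 := half_mem_spectrum winf (val_bound hvalinf) hblocks
  -- convergence for H
  have hc := (hconv H).eventually (eventually_lt_nhds (by norm_num : (0:ℝ) < 1/8))
  rw [Filter.eventually_atTop] at hc
  obtain ⟨N0, hN0⟩ := hc
  set n' : ℕ := (st (N0+1)).n with hn'
  have hn'ge : N0 ≤ n' := le_trans (Nat.le_succ N0) (hnk (N0+1))
  -- the small-norm property at time n'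
  have hz4 : ∀ z ∈ (Γ n' H : Set ℂ), ‖z‖ ≤ 1/4 := by
    have h5 := (hf (st N0)).2.2.2.2
    rw [← hst] at h5
    exact h5 winf hvalinf (fun j hj => hagreeinf (N0+1) j hj)
  -- but Γ n' H is 1/8-close to the spectrum which contains 1/2
  have hd : Metric.hausdorffDist (Γ n' H : Set ℂ) (spectrum ℂ H.1) < 1/8 := hN0 n' hn'ge
  have hne : EMetric.hausdorffEdist (spectrum ℂ H.1) (Γ n' H : Set ℂ) ≠ ⊤ := by
    apply Metric.hausdorffEdist_ne_top_of_nonempty_of_bounded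
    · exact spectrum.nonempty H.1
    · exact (Γ n' H).nonempty
    · exact (spectrum.isCompact H.1).isBounded
    · exact (Γ n' H).isCompact.isBounded
  have hinf : Metric.infDist (1/2 : ℂ) (Γ n' H : Set ℂ)
      ≤ Metric.hausdorffDist (spectrum ℂ H.1) (Γ n' H : Set ℂ) :=
    Metric.infDist_le_hausdorffDist_of_mem hhalf hne
  rw [Metric.hausdorffDist_comm] at hinf
  have hlt : Metric.infDist (1/2 : ℂ) (Γ n' H : Set ℂ) < 1/8 := lt_of_le_of_lt hinf hd
  obtain ⟨z, hzmem, hzd⟩ := (Metric.infDist_lt_iff (Γ n' H).nonempty).mp hlt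
  have h1 : ‖z‖ ≤ 1/4 := hz4 z hzmem
  have h2 : ‖(1/2 : ℂ)‖ - ‖z‖ ≤ ‖(1/2 : ℂ) - z‖ := norm_sub_norm_le _ _
  rw [← dist_eq_norm] at h2
  have h3 : ‖(1/2 : ℂ)‖ = 1/2 := by norm_num
  rw [h3] at h2
  linarith
end

section
/- Let k ≥ 1 and let z ∈ ℂ with 0 < |z| < 1. Then the operator norm of (J_k − zI)^{-1}, as a linear map on ℂ^k with the Euclidean norm, satisfies ‖(J_k − zI)^{-1}‖ ≥ |z|^{−k}. -/
/-- The `k × k` nilpotent Jordan block over `ℂ`: ones on the superdiagonal,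
zeros elsewhere. -/
noncomputable def JordanBlock (k : ℕ) : Matrix (Fin k) (Fin k) ℂ :=
  Matrix.of fun i j => if (j : ℕ) = (i : ℕ) + 1 then 1 else 0

lemma coord_le_norm {k : ℕ} (y : EuclideanSpace ℂ (Fin k)) (i : Fin k) : ‖y i‖ ≤ ‖y‖ := by
  rw [EuclideanSpace.norm_eq]
  have h1 : ‖y i‖ ^ 2 ≤ ∑ j, ‖y j‖ ^ 2 :=
    Finset.single_le_sum (f := fun j => ‖y j‖ ^ 2) (fun j _ => sq_nonneg _) (Finset.mem_univ i)
  calc ‖y i‖ = Real.sqrt (‖y i‖ ^ 2) := by rw [Real.sqrt_sq (norm_nonneg _)]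
    _ ≤ _ := Real.sqrt_le_sqrt h1

lemma entry_le_opNorm {k : ℕ} (A : Matrix (Fin k) (Fin k) ℂ) (i j : Fin k) :
    ‖A i j‖ ≤ ‖Matrix.toEuclideanCLM (𝕜 := ℂ) (n := Fin k) A‖ := by
  set T := Matrix.toEuclideanCLM (𝕜 := ℂ) (n := Fin k) A
  have hx : T ((WithLp.equiv _ _).symm (Pi.single j 1)) =
      (WithLp.equiv _ _).symm (Matrix.toLin' A (Pi.single j 1)) := rfl
  have hval : (T ((WithLp.equiv _ _).symm (Pi.single j 1))) i = A i j := by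
    rw [hx]
    simp [Matrix.toLin'_apply, Matrix.mulVec_single]
  have h1 : ‖A i j‖ ≤ ‖T ((WithLp.equiv _ _).symm (Pi.single j 1))‖ := by
    rw [← hval]; exact coord_le_norm _ i
  have h2 : ‖T ((WithLp.equiv _ _).symm (Pi.single j 1))‖ ≤ ‖T‖ * ‖((WithLp.equiv _ _).symm (Pi.single j 1) : EuclideanSpace ℂ (Fin k))‖ :=
    T.le_opNorm _
  have h3 : ‖((WithLp.equiv _ _).symm (Pi.single j 1) : EuclideanSpace ℂ (Fin k))‖ = 1 := by
    rw [WithLp.equiv_symm_apply, PiLp.toLp_single, PiLp.norm_single, norm_one]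
  nlinarith [norm_nonneg T]

/-- For `k ≥ 1` and `0 < |z| < 1`, the operator norm (w.r.t. the Euclidean norm on `ℂ^k`)
of `(J_k - z I)⁻¹` is at least `|z|^{-k}`. -/
theorem stmt3 (k : ℕ) (hk : 1 ≤ k) (z : ℂ) (h0 : 0 < ‖z‖) (h1 : ‖z‖ < 1) :
    ‖z‖ ^ (-(k : ℤ)) ≤
      ‖Matrix.toEuclideanCLM (𝕜 := ℂ) (n := Fin k) ((JordanBlock k - z • 1)⁻¹)‖ := by
  have hz : z ≠ 0 := by simpa using h0.ne'
  set w := z⁻¹ with hw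
  set C : Matrix (Fin k) (Fin k) ℂ :=
    Matrix.of (fun i j => if (i : ℕ) ≤ (j : ℕ) then -(w ^ ((j : ℕ) - (i : ℕ) + 1)) else 0) with hC
  have hzw : z * w = 1 := mul_inv_cancel₀ hz
  have hmul : (JordanBlock k - z • 1) * C = 1 := by
    ext i j
    rw [Matrix.mul_apply]
    have hterm : ∀ l : Fin k, (JordanBlock k - z • 1) i l * C l j =
        (if (l : ℕ) = (i : ℕ) + 1 then C l j else 0) - (if i = l then z * C l j else 0) := by
      intro l
      simp only [Matrix.sub_apply, Matrix.smul_apply, Matrix.one_apply, JordanBlock,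
        Matrix.of_apply, smul_eq_mul]
      split_ifs <;> ring
    rw [Finset.sum_congr rfl (fun l _ => hterm l), Finset.sum_sub_distrib,
      Finset.sum_ite_eq _ i (fun l => z * C l j)]
    simp only [Finset.mem_univ, if_true]
    by_cases hik : (i : ℕ) + 1 < k
    · have hsum : ∑ l : Fin k, (if (l : ℕ) = (i : ℕ) + 1 then C l j else 0)
          = C ⟨(i : ℕ) + 1, hik⟩ j := by
        rw [Finset.sum_eq_single (⟨(i : ℕ) + 1, hik⟩ : Fin k)]
        · simp
        · intro l _ hl
          rw [if_neg]
          intro hc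
          exact hl (Fin.ext hc)
        · simp
      rw [hsum]
      simp only [hC, Matrix.of_apply, Matrix.one_apply]
      rcases lt_trichotomy (j : ℕ) (i : ℕ) with h | h | h
      · rw [if_neg (by omega), if_neg (by omega), if_neg (by omega)]; ring
      · rw [if_neg (by omega), if_pos (by omega), if_pos (Fin.ext h.symm)]
        have : (j : ℕ) - (i : ℕ) + 1 = 1 := by omega
        rw [this, pow_one]
        have : (0 : ℂ) - z * -w = z * w := by ring
        rw [this, hzw]
      · rw [if_pos (by omega), if_pos (by omega)]
        rw [if_neg (fun hc => by simp [Fin.ext_iff] at hc; omega)]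
        have e1 : (j : ℕ) - ((i : ℕ) + 1) + 1 = (j : ℕ) - (i : ℕ) := by omega
        rw [e1, show (j : ℕ) - (i : ℕ) + 1 = ((j : ℕ) - (i : ℕ)) + 1 from rfl, pow_succ]
        have hzz : z * (w ^ ((j : ℕ) - (i : ℕ)) * w) = w ^ ((j : ℕ) - (i : ℕ)) := by
          rw [mul_comm (w ^ _) w, ← mul_assoc, hzw, one_mul]
        rw [mul_neg, hzz]
        ring
    · have hik' : (i : ℕ) + 1 = k := by omega
      have hsum : ∑ l : Fin k, (if (l : ℕ) = (i : ℕ) + 1 then C l j else 0) = 0 := by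
        apply Finset.sum_eq_zero
        intro l _
        rw [if_neg]
        omega
      rw [hsum]
      simp only [hC, Matrix.of_apply, Matrix.one_apply]
      rcases lt_trichotomy (j : ℕ) (i : ℕ) with h | h | h
      · rw [if_neg (by omega), if_neg (by omega)]; ring
      · rw [if_pos (by omega), if_pos (Fin.ext h.symm)]
        have : (j : ℕ) - (i : ℕ) + 1 = 1 := by omega
        rw [this, pow_one]
        have : (0 : ℂ) - z * -w = z * w := by ring
        rw [this, hzw]
      · omega
  have hinv : (JordanBlock k - z • 1)⁻¹ = C := Matrix.inv_eq_right_inv hmul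
  have i0 : Fin k := ⟨0, hk⟩
  have hentry : C ⟨0, hk⟩ ⟨k - 1, by omega⟩ = -(w ^ k) := by
    simp only [hC, Matrix.of_apply]
    rw [if_pos (by omega)]
    congr 1
    congr 1
    omega
  have hle := entry_le_opNorm ((JordanBlock k - z • 1)⁻¹) ⟨0, hk⟩ ⟨k - 1, by omega⟩
  rw [hinv, hentry] at hle
  have hnorm : ‖-(w ^ k)‖ = ‖z‖ ^ (-(k : ℤ)) := by
    rw [norm_neg, norm_pow, hw, norm_inv, inv_pow, zpow_neg, zpow_natCast]
  rw [hinv, ← hnorm]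
  exact hle
end

section
/- Let z ∈ ℂ with 0 < |z| ≤ 1. Then ‖(J_k − zI)^{-1}‖ → ∞ as k → ∞, where the norm is the operator norm on ℂ^k with the Euclidean norm. -/
noncomputable def JInv (k : ℕ) (z : ℂ) : Matrix (Fin k) (Fin k) ℂ :=
  Matrix.of fun i j => if (i : ℕ) ≤ (j : ℕ) then -(z⁻¹ ^ ((j : ℕ) - (i : ℕ) + 1)) else 0

lemma jordan_inv (k : ℕ) (z : ℂ) (hz : z ≠ 0) :
    (JordanBlock k - z • 1)⁻¹ = JInv k z := by
  apply Matrix.inv_eq_right_inv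
  ext i j
  rw [Matrix.mul_apply]
  have expand : ∀ l : Fin k, (JordanBlock k - z • 1) i l * JInv k z l j
      = (if (l:ℕ) = (i:ℕ)+1 then JInv k z l j else 0) - (if i = l then z * JInv k z l j else 0) := by
    intro l
    simp only [Matrix.sub_apply, Matrix.smul_apply, Matrix.one_apply, JordanBlock,
      Matrix.of_apply, smul_eq_mul]
    split_ifs <;> ring
  rw [Finset.sum_congr rfl fun l _ => expand l, Finset.sum_sub_distrib]
  simp only [JInv, Matrix.of_apply, Matrix.one_apply]
  have h2 : (∑ l : Fin k, (if i = l then z * (if (l:ℕ) ≤ (j:ℕ) then -(z⁻¹ ^ ((j:ℕ) - l + 1)) else 0) else 0))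
      = z * (if (i:ℕ) ≤ (j:ℕ) then -(z⁻¹ ^ ((j:ℕ) - i + 1)) else 0) := by
    rw [Finset.sum_ite_eq]; simp
  have h1 : (∑ l : Fin k, (if (l:ℕ) = (i:ℕ) + 1 then (if (l:ℕ) ≤ (j:ℕ) then -(z⁻¹ ^ ((j:ℕ) - l + 1)) else 0) else 0))
      = if h : (i:ℕ) + 1 < k then (if (i:ℕ)+1 ≤ (j:ℕ) then -(z⁻¹ ^ ((j:ℕ) - ((i:ℕ)+1) + 1)) else 0) else 0 := by
    by_cases h : (i:ℕ) + 1 < k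
    · rw [dif_pos h]
      rw [Finset.sum_eq_single (⟨(i:ℕ)+1, h⟩ : Fin k)]
      · have hv : ((⟨(i:ℕ)+1, h⟩ : Fin k) : ℕ) = (i:ℕ)+1 := rfl
        rw [hv, if_pos rfl]
      · intro l _ hl
        exact if_neg fun hc => hl (Fin.ext hc)
      · intro hmem
        exact absurd (Finset.mem_univ _) hmem
    · rw [dif_neg h]
      refine Finset.sum_eq_zero fun l _ => if_neg fun hc => h ?_
      have := l.isLt
      omega

  rw [h1, h2]
  simp only [Fin.ext_iff]
  split_ifs <;> (try (exfalso; omega)) <;> (try ring) <;>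
    first
      | (rw [show (j:ℕ) - (i:ℕ) = 0 from by omega, pow_zero, mul_one, mul_inv_cancel₀ hz])
      | (rw [mul_inv_cancel₀ hz, one_mul,
            show (j:ℕ) - (i:ℕ) = ((j:ℕ) - (1 + (i:ℕ))) + 1 from by omega, pow_succ]
         ring)

/-- For `0 < |z| ≤ 1`, the operator norm (w.r.t. the Euclidean norm on `ℂ^k`) of
`(J_k - z I)⁻¹` tends to infinity as `k → ∞`. -/
theorem stmt4 (z : ℂ) (h0 : 0 < ‖z‖) (h1 : ‖z‖ ≤ 1) :
    Filter.Tendsto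
      (fun k : ℕ =>
        ‖Matrix.toEuclideanCLM (𝕜 := ℂ) (n := Fin k) ((JordanBlock k - z • 1)⁻¹)‖)
      Filter.atTop Filter.atTop := by
  have hz : z ≠ 0 := by simpa using h0.ne'
  have hzi : 1 ≤ ‖z⁻¹‖ := by
    rw [norm_inv]
    exact (one_le_inv₀ h0).mpr h1
  have hsqrt : Filter.Tendsto (fun k : ℕ => Real.sqrt k) Filter.atTop Filter.atTop := by
    have : Filter.Tendsto (fun x : ℝ => x ^ ((1:ℝ)/2)) Filter.atTop Filter.atTop :=
      tendsto_rpow_atTop (by norm_num)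
    have := this.comp (tendsto_natCast_atTop_atTop (R := ℝ))
    refine this.congr fun k => ?_
    simp [Real.sqrt_eq_rpow]
  apply Filter.tendsto_atTop_mono' _ _ hsqrt
  filter_upwards [Filter.eventually_ge_atTop 1] with k hk
  set A := (JordanBlock k - z • 1)⁻¹ with hA
  have hAeq : A = JInv k z := jordan_inv k z hz
  set j : Fin k := ⟨k - 1, by omega⟩ with hj
  set v : EuclideanSpace ℂ (Fin k) := EuclideanSpace.single j 1 with hv
  have hvnorm : ‖v‖ = 1 := by simp [hv]
  have happ : Matrix.toEuclideanCLM (𝕜 := ℂ) (n := Fin k) A v =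
      (WithLp.equiv 2 _).symm (fun i => A i j) := by
    rw [hv]
    show Matrix.toEuclideanCLM (𝕜 := ℂ) (n := Fin k) A ((WithLp.equiv 2 _).symm (Pi.single j 1)) = _
    show WithLp.toLp 2 (Matrix.mulVec A (Pi.single j 1)) = _
    congr 1
    rw [Matrix.mulVec_single]
    simp
    rfl
  have hle : ‖Matrix.toEuclideanCLM (𝕜 := ℂ) (n := Fin k) A v‖ ≤
      ‖Matrix.toEuclideanCLM (𝕜 := ℂ) (n := Fin k) A‖ := by
    calc _ ≤ ‖Matrix.toEuclideanCLM (𝕜 := ℂ) (n := Fin k) A‖ * ‖v‖ :=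
          (Matrix.toEuclideanCLM (𝕜 := ℂ) (n := Fin k) A).le_opNorm v
    _ = _ := by rw [hvnorm, mul_one]
  refine le_trans ?_ hle
  rw [happ]
  rw [EuclideanSpace.norm_eq]
  have hterm : ∀ i : Fin k, (1:ℝ) ≤ ‖A i j‖ ^ 2 := by
    intro i
    have hij : (i:ℕ) ≤ (j:ℕ) := by
      simp only [hj]
      omega
    rw [hAeq]
    simp only [JInv, Matrix.of_apply, if_pos hij, norm_neg, norm_pow]
    have : (1:ℝ) ≤ ‖z⁻¹‖ ^ ((j:ℕ) - (i:ℕ) + 1) := one_le_pow₀ hzi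
    nlinarith
  apply Real.sqrt_le_sqrt
  calc (k:ℝ) = ∑ _i : Fin k, (1:ℝ) := by simp
  _ ≤ ∑ i : Fin k, ‖A i j‖ ^ 2 := Finset.sum_le_sum fun i _ => hterm i
end

section
/- Let w : ℕ → {0,1} and let H be the bounded operator on ℓ²(ℕ) determined by H e_0 = 0 and H e_n = w(n) e_{n−1} for n ≥ 1 (a weighted backward shift with 0/1 weights). If the runs of consecutive 1's in w are unbounded, i.e. for every m ∈ ℕ there exists n ≥ 1 with w(n) = w(n+1) = ⋯ = w(n+m) = 1, then Sp(H) = {z ∈ ℂ : |z| ≤ 1}, the closed unit disk. -/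
open Finset
open scoped InnerProductSpace ENNReal

private lemma geo_le {r : ℝ} (h0 : 0 ≤ r) (h1 : r < 1) (n : ℕ) :
    ∑ i ∈ Finset.range n, r ^ i ≤ 1 / (1 - r) := by
  have h2 : (0:ℝ) < 1 - r := by linarith
  rw [le_div_iff₀ h2]
  nlinarith [geom_sum_mul r n, pow_nonneg h0 n]

private lemma dense_span_single' (f : lp (fun _ : ℕ => ℂ) 2) :
    f ∈ closure (Submodule.span ℂ (Set.range (fun n : ℕ => lp.single 2 n (1:ℂ))) :
      Set (lp (fun _ : ℕ => ℂ) 2)) := by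
  have h := lp.hasSum_single (by norm_num : (2:ℝ≥0∞) ≠ ⊤) f
  refine mem_closure_of_tendsto h (Filter.Eventually.of_forall ?_)
  intro s
  refine Submodule.sum_mem _ (fun i _ => ?_)
  have : lp.single 2 i (f i) = (f i : ℂ) • lp.single (E := fun _ : ℕ => ℂ) 2 i (1:ℂ) := by
    rw [← lp.single_smul]
    norm_num
  rw [this]
  exact Submodule.smul_mem _ _ (Submodule.subset_span ⟨i, rfl⟩)

private lemma opnorm_le' (w : ℕ → ℂ) (hw : ∀ n, w n = 0 ∨ w n = 1)
    (H : lp (fun _ : ℕ => ℂ) 2 →L[ℂ] lp (fun _ : ℕ => ℂ) 2)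
    (hH0 : H (lp.single 2 0 1) = 0)
    (hHn : ∀ n : ℕ, 1 ≤ n → H (lp.single 2 n 1) = w n • lp.single 2 (n - 1) 1) :
    ∀ x, ‖H x‖ ≤ ‖x‖ := by
  have hq : (0:ℝ) < (2:ℝ≥0∞).toReal := by norm_num
  set v : ℕ → lp (fun _ : ℕ => ℂ) 2 := fun n => lp.single 2 n (1:ℂ) with hv
  have hspan : ∀ x ∈ (Submodule.span ℂ (Set.range v) : Set (lp (fun _ : ℕ => ℂ) 2)),
      ‖H x‖ ≤ ‖x‖ := by
    intro x hx
    obtain ⟨c, rfl⟩ := Finsupp.mem_span_range_iff_exists_finsupp.mp hx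
    rw [Finsupp.sum]
    set s := c.support
    -- describe H on singles uniformly
    set d : ℕ → ℂ := fun i => if i = 0 then 0 else w i with hd
    have hdle : ∀ i, ‖d i‖ ≤ 1 := by
      intro i
      rcases hw i with h | h <;> simp [hd, h] <;> split <;> norm_num
    have hH1 : ∀ i, H (v i) = d i • lp.single 2 (i - 1) (1:ℂ) := by
      intro i
      rcases Nat.eq_zero_or_pos i with h | h
      · subst h; simp [hv, hd, hH0]
      · rw [hv, hHn i h, hd]
        simp [Nat.pos_iff_ne_zero.mp h]
    -- rewrite x as sum of singles
    have hx2 : ∑ i ∈ s, c i • v i = ∑ i ∈ s, lp.single 2 i (c i) := by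
      refine Finset.sum_congr rfl fun i _ => ?_
      rw [hv]
      rw [show (c i : ℂ) • lp.single (E := fun _ : ℕ => ℂ) 2 i (1:ℂ)
            = lp.single 2 i ((c i) • (1:ℂ)) from (lp.single_smul 2 i (c i) 1).symm]
      norm_num
    -- compute H x
    have hHx : H (∑ i ∈ s, c i • v i)
        = ∑ i ∈ s, lp.single 2 (i-1) (c i * d i) := by
      rw [map_sum]
      refine Finset.sum_congr rfl fun i _ => ?_
      rw [map_smul, hH1 i, smul_smul]
      rw [show (c i * d i : ℂ) • lp.single (E := fun _ : ℕ => ℂ) 2 (i-1) (1:ℂ)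
            = lp.single 2 (i-1) ((c i * d i) • (1:ℂ)) from (lp.single_smul 2 (i-1) _ 1).symm]
      norm_num
    -- drop the i = 0 term
    have h0 : lp.single (E := fun _ : ℕ => ℂ) 2 (0-1) (c 0 * d 0) = 0 := by
      simp [hd]
    have hHx2 : H (∑ i ∈ s, c i • v i)
        = ∑ i ∈ s.erase 0, lp.single 2 (i-1) (c i * d i) := by
      rw [hHx]
      by_cases h0s : 0 ∈ s
      · rw [← Finset.sum_erase_add s _ h0s, h0, add_zero]
      · rw [Finset.erase_eq_of_notMem h0s]
    -- reindex
    have hinj : ∀ i ∈ s.erase 0, ∀ j ∈ s.erase 0, i - 1 = j - 1 → i = j := by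
      intro i hi j hj hij
      have hi0 := Finset.mem_erase.mp hi
      have hj0 := Finset.mem_erase.mp hj
      omega
    set t := (s.erase 0).image (· - 1) with ht
    have himg : ∑ j ∈ t, lp.single (E := fun _ : ℕ => ℂ) 2 j (c (j+1) * d (j+1))
        = ∑ i ∈ s.erase 0, lp.single 2 (i-1) (c i * d i) := by
      rw [ht, Finset.sum_image hinj]
      refine Finset.sum_congr rfl fun i hi => ?_
      have hi0 := (Finset.mem_erase.mp hi).1
      rw [show i - 1 + 1 = i by omega]
    have himg2 : ∑ j ∈ t, ‖c (j+1) * d (j+1)‖ ^ (2:ℝ≥0∞).toReal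
        = ∑ i ∈ s.erase 0, ‖c i * d i‖ ^ (2:ℝ≥0∞).toReal := by
      rw [ht, Finset.sum_image hinj]
      refine Finset.sum_congr rfl fun i hi => ?_
      have hi0 := (Finset.mem_erase.mp hi).1
      rw [show i - 1 + 1 = i by omega]
    -- norms
    have hnx : ‖∑ i ∈ s, c i • v i‖ ^ (2:ℝ≥0∞).toReal = ∑ i ∈ s, ‖c i‖ ^ (2:ℝ≥0∞).toReal := by
      rw [hx2]
      simpa using lp.norm_sum_single hq (fun i => (c i : ℂ)) s
    have hnHx : ‖H (∑ i ∈ s, c i • v i)‖ ^ (2:ℝ≥0∞).toReal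
        = ∑ i ∈ s.erase 0, ‖c i * d i‖ ^ (2:ℝ≥0∞).toReal := by
      rw [hHx2, ← himg, ← himg2]
      simpa using lp.norm_sum_single hq (fun j => (c (j+1) * d (j+1) : ℂ)) t
    have hle : ‖H (∑ i ∈ s, c i • v i)‖ ^ (2:ℝ≥0∞).toReal
        ≤ ‖∑ i ∈ s, c i • v i‖ ^ (2:ℝ≥0∞).toReal := by
      rw [hnx, hnHx]
      calc ∑ i ∈ s.erase 0, ‖c i * d i‖ ^ (2:ℝ≥0∞).toReal
          ≤ ∑ i ∈ s.erase 0, ‖c i‖ ^ (2:ℝ≥0∞).toReal := by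
            refine Finset.sum_le_sum fun i _ => ?_
            refine Real.rpow_le_rpow (norm_nonneg _) ?_ hq.le
            calc ‖c i * d i‖ = ‖c i‖ * ‖d i‖ := norm_mul _ _
              _ ≤ ‖c i‖ * 1 := by
                  exact mul_le_mul_of_nonneg_left (hdle i) (norm_nonneg _)
              _ = ‖c i‖ := mul_one _
        _ ≤ ∑ i ∈ s, ‖c i‖ ^ (2:ℝ≥0∞).toReal := by
            refine Finset.sum_le_sum_of_subset_of_nonneg (Finset.erase_subset _ _)
              fun i _ _ => Real.rpow_nonneg (norm_nonneg _) _
    exact (Real.rpow_le_rpow_iff (norm_nonneg _) (norm_nonneg _) hq).mp hle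
  intro x
  have hcl : IsClosed {y : lp (fun _ : ℕ => ℂ) 2 | ‖H y‖ ≤ ‖y‖} :=
    isClosed_le (H.continuous.norm) continuous_norm
  exact hcl.closure_subset_iff.mpr hspan (dense_span_single' x)

private def cc (N : ℕ) (z : ℂ) (i : ℕ) : ℂ := ((N + 1 - i : ℕ) : ℂ) * z ^ i

private lemma cc_step {N : ℕ} (z : ℂ) {i : ℕ} (hi : i < N) :
    z * cc N z i - cc N z (i+1) = z^(i+1) := by
  unfold cc
  rw [show (N + 1 - i : ℕ) = (N - i) + 1 by omega, show (N + 1 - (i+1) : ℕ) = N - i by omega]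
  push_cast
  ring

private lemma cc_top (N : ℕ) (z : ℂ) : z * cc N z N = z^(N+1) := by
  unfold cc
  rw [show (N + 1 - N : ℕ) = 1 by omega]
  push_cast
  ring

private lemma cc_zero (N : ℕ) (z : ℂ) : cc N z 0 = ((N:ℂ)+1) := by
  unfold cc; push_cast [Nat.sub_zero]; ring

private lemma mem_spec' (w : ℕ → ℂ) (hw : ∀ n, w n = 0 ∨ w n = 1)
    (H : lp (fun _ : ℕ => ℂ) 2 →L[ℂ] lp (fun _ : ℕ => ℂ) 2)
    (hH0 : H (lp.single 2 0 1) = 0)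
    (hHn : ∀ n : ℕ, 1 ≤ n → H (lp.single 2 n 1) = w n • lp.single 2 (n - 1) 1)
    (hrun : ∀ m : ℕ, ∃ n : ℕ, 1 ≤ n ∧ ∀ k ≤ m, w (n + k) = 1)
    (z : ℂ) (hz : ‖z‖ < 1) : z ∈ spectrum ℂ H := by
  classical
  haveI : DecidablePred (fun j => w j = 0) := Classical.decPred _
  rw [spectrum.mem_iff]
  intro hunit
  obtain ⟨V, hV⟩ := hunit
  set B := ((V⁻¹ : _ˣ) : lp (fun _ : ℕ => ℂ) 2 →L[ℂ] lp (fun _ : ℕ => ℂ) 2) with hBdef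
  have hB : ∀ y : lp (fun _ : ℕ => ℂ) 2,
      ‖y‖ ≤ ‖B‖ * ‖(algebraMap ℂ _ z - H) y‖ := by
    intro y
    have h1 : y = B ((algebraMap ℂ _ z - H) y) := by
      rw [← hV, hBdef, ← ContinuousLinearMap.mul_apply, Units.inv_mul,
        ContinuousLinearMap.one_apply]
    conv_lhs => rw [h1]
    exact B.le_opNorm _
  set m := Nat.ceil (‖B‖ / (1 - ‖z‖)) with hm
  obtain ⟨n, hn1, hnk⟩ := hrun m
  set a := Nat.findGreatest (fun j => w j = 0) n with ha
  have han : a ≤ n := Nat.findGreatest_le n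
  have hHa : H (lp.single 2 a 1) = 0 := by
    rcases Nat.eq_zero_or_pos a with h | h
    · rw [h]; exact hH0
    · have hwa0 : w a = 0 := by
        by_cases hex : ∃ j, j ≤ n ∧ w j = 0
        · obtain ⟨j, hj1, hj2⟩ := hex
          exact Nat.findGreatest_spec (P := fun j => w j = 0) hj1 hj2
        · exfalso
          push_neg at hex
          have : Nat.findGreatest (fun j => w j = 0) n = 0 := by
            rw [Nat.findGreatest_eq_zero_iff]
            intro k hk1 hk2
            exact hex k hk2
          omega
      rw [hHn a h, hwa0, zero_smul]
  have hwa : ∀ j, a < j → j ≤ n → w j = 1 := fun j h1 h2 =>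
    (hw j).resolve_left (Nat.findGreatest_is_greatest h1 h2)
  set N := n + m - a with hN
  have hNm : m ≤ N := by omega
  have hwN : ∀ j, 1 ≤ j → j ≤ N → w (a + j) = 1 := by
    intro j h1 h2
    by_cases hc : a + j ≤ n
    · exact hwa (a+j) (by omega) hc
    · rw [show a + j = n + (a + j - n) by omega]
      exact hnk _ (by omega)
  set u : lp (fun _ : ℕ => ℂ) 2 :=
    ∑ i ∈ range (N+1), cc N z i • lp.single 2 (a+i) (1:ℂ) with hu
  -- H u
  have hHu : H u = ∑ i ∈ range N, cc N z (i+1) • lp.single 2 (a+i) (1:ℂ) := by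
    rw [hu, map_sum]
    simp only [map_smul]
    rw [Finset.sum_range_succ']
    have h0 : cc N z 0 • H (lp.single 2 (a+0) 1) = 0 := by
      rw [Nat.add_zero, hHa, smul_zero]
    rw [h0, add_zero]
    refine Finset.sum_congr rfl fun i hi => ?_
    have hi' := Finset.mem_range.mp hi
    rw [hHn (a+(i+1)) (by omega), hwN (i+1) (by omega) (by omega), one_smul]
    rw [show a + (i+1) - 1 = a + i by omega]
  -- the defect
  have hdef : (algebraMap ℂ (lp (fun _ : ℕ => ℂ) 2 →L[ℂ] lp (fun _ : ℕ => ℂ) 2) z - H) u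
      = ∑ i ∈ range (N+1), z^(i+1) • lp.single 2 (a+i) (1:ℂ) := by
    rw [ContinuousLinearMap.sub_apply, Algebra.algebraMap_eq_smul_one,
      ContinuousLinearMap.smul_apply, ContinuousLinearMap.one_apply, hHu]
    rw [hu, Finset.smul_sum]
    simp only [smul_smul]
    rw [Finset.sum_range_succ, Finset.sum_range_succ]
    rw [add_sub_right_comm, ← Finset.sum_sub_distrib]
    congr 1
    · refine Finset.sum_congr rfl fun i hi => ?_
      rw [← sub_smul, cc_step z (Finset.mem_range.mp hi)]
    · rw [cc_top]
  -- upper bound for the defect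
  have hub : ‖∑ i ∈ range (N+1), z^(i+1) • lp.single (E := fun _ : ℕ => ℂ) 2 (a+i) (1:ℂ)‖
      ≤ 1 / (1 - ‖z‖) := by
    calc ‖∑ i ∈ range (N+1), z^(i+1) • lp.single (E := fun _ : ℕ => ℂ) 2 (a+i) (1:ℂ)‖
        ≤ ∑ i ∈ range (N+1), ‖z^(i+1) • lp.single (E := fun _ : ℕ => ℂ) 2 (a+i) (1:ℂ)‖ :=
          norm_sum_le _ _
      _ = ∑ i ∈ range (N+1), ‖z‖^(i+1) := by
          refine Finset.sum_congr rfl fun i _ => ?_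
          rw [norm_smul, norm_pow]
          have : ‖lp.single (E := fun _ : ℕ => ℂ) 2 (a+i) (1:ℂ)‖ = 1 := by
            simpa using lp.norm_single (by norm_num : (0:ℝ) < (2:ℝ≥0∞).toReal)
              (fun _ : ℕ => (1:ℂ)) (a+i)
          rw [this, mul_one]
      _ ≤ ∑ i ∈ range (N+1), ‖z‖^i := by
          refine Finset.sum_le_sum fun i _ => ?_
          exact pow_le_pow_of_le_one (norm_nonneg z) hz.le (by omega)
      _ ≤ 1 / (1 - ‖z‖) := geo_le (norm_nonneg z) hz (N+1)
  -- lower bound for u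
  have hlb : ((N:ℝ)+1) ≤ ‖u‖ := by
    have hinner : ⟪lp.single 2 a (1:ℂ), u⟫_ℂ = ((N:ℂ)+1) := by
      rw [hu, inner_sum]
      rw [Finset.sum_eq_single_of_mem 0 (Finset.mem_range.mpr (by omega))]
      · rw [inner_smul_right, lp.inner_single_left]
        simp only [Nat.add_zero]
        rw [lp.single_apply_self (E := fun _ : ℕ => ℂ)]
        simp [cc_zero]
      · intro i _ hi0
        rw [inner_smul_right, lp.inner_single_left]
        rw [lp.single_apply_ne (E := fun _ : ℕ => ℂ) 2 (a+i) (1:ℂ) (show a ≠ a+i by omega)]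
        simp
    have h2 : ‖⟪lp.single 2 a (1:ℂ), u⟫_ℂ‖ ≤ ‖lp.single (E := fun _ : ℕ => ℂ) 2 a (1:ℂ)‖ * ‖u‖ :=
      norm_inner_le_norm _ _
    rw [hinner] at h2
    have h3 : ‖((N:ℂ)+1)‖ = (N:ℝ)+1 := by
      rw [show ((N:ℂ)+1) = ((N+1 : ℕ) : ℂ) by push_cast; ring, Complex.norm_natCast]
      push_cast; ring
    have h4 : ‖lp.single (E := fun _ : ℕ => ℂ) 2 a (1:ℂ)‖ = 1 := by
      simpa using lp.norm_single (by norm_num : (0:ℝ) < (2:ℝ≥0∞).toReal)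
        (fun _ : ℕ => (1:ℂ)) a
    rw [h3, h4, one_mul] at h2
    exact h2
  -- contradiction
  have hchain : ((N:ℝ)+1) ≤ ‖B‖ * (1 / (1 - ‖z‖)) := by
    calc ((N:ℝ)+1) ≤ ‖u‖ := hlb
      _ ≤ ‖B‖ * ‖(algebraMap ℂ _ z - H) u‖ := hB u
      _ ≤ ‖B‖ * (1 / (1 - ‖z‖)) := by
          refine mul_le_mul_of_nonneg_left ?_ (norm_nonneg B)
          rw [hdef]
          exact hub
  have hm2 : ‖B‖ / (1 - ‖z‖) ≤ (m:ℝ) := Nat.le_ceil _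
  have hm3 : (m:ℝ) ≤ (N:ℝ) := Nat.cast_le.mpr hNm
  rw [mul_one_div] at hchain
  linarith


private instance nontriv' : Nontrivial (lp (fun _ : ℕ => ℂ) 2) := by
  refine ⟨⟨lp.single 2 0 1, 0, fun h => ?_⟩⟩
  have h4 : ‖lp.single (E := fun _ : ℕ => ℂ) 2 0 (1:ℂ)‖ = 1 := by
    simpa using lp.norm_single (by norm_num : (0:ℝ) < (2:ℝ≥0∞).toReal) (fun _ : ℕ => (1:ℂ)) 0
  rw [h] at h4
  simp at h4

/-- Let `H` be the bounded weighted backward shift on `ℓ²(ℕ)` with weights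
`w : ℕ → {0,1}` (i.e. `H e_0 = 0` and `H e_n = w(n) e_{n-1}` for `n ≥ 1`). If the runs
of consecutive `1`'s in `w` are unbounded (for every `m` there is `n ≥ 1` with
`w(n) = w(n+1) = ⋯ = w(n+m) = 1`), then `Sp(H)` is the closed unit disk. -/
theorem stmt6 (w : ℕ → ℂ) (hw : ∀ n, w n = 0 ∨ w n = 1)
    (H : lp (fun _ : ℕ => ℂ) 2 →L[ℂ] lp (fun _ : ℕ => ℂ) 2)
    (hH0 : H (lp.single 2 0 1) = 0)
    (hHn : ∀ n : ℕ, 1 ≤ n → H (lp.single 2 n 1) = w n • lp.single 2 (n - 1) 1)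
    (hrun : ∀ m : ℕ, ∃ n : ℕ, 1 ≤ n ∧ ∀ k ≤ m, w (n + k) = 1) :
    spectrum ℂ H = Metric.closedBall (0 : ℂ) 1 := by
  have hnorm : ‖H‖ ≤ 1 :=
    H.opNorm_le_bound zero_le_one (fun x => by
      simpa using opnorm_le' w hw H hH0 hHn x)
  apply Set.Subset.antisymm
  · intro z hz
    have h1 := spectrum.subset_closedBall_norm H hz
    exact Metric.closedBall_subset_closedBall hnorm h1
  · have hball : Metric.ball (0:ℂ) 1 ⊆ spectrum ℂ H := by
      intro z hz
      rw [Metric.mem_ball, dist_zero_right] at hz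
      exact mem_spec' w hw H hH0 hHn hrun z hz
    calc Metric.closedBall (0:ℂ) 1 = closure (Metric.ball (0:ℂ) 1) :=
          (closure_ball (0:ℂ) one_ne_zero).symm
      _ ⊆ closure (spectrum ℂ H) := closure_mono hball
      _ = spectrum ℂ H := (spectrum.isClosed H).closure_eq
end

section
/- Let X be a complex Banach space, H a bounded linear operator on X, and z ∈ ℂ with H − zI invertible. Let Q_1, …, Q_m be bounded projections on X (Q_n² = Q_n) satisfying Q_n Q_{n'} = 0 for n ≠ n', Q_n H = H Q_n for all n, and H Q_n = λ_n Q_n for scalars λ_1, …, λ_m ∈ ℂ with λ_n ≠ z for all n. Set S_m = Q_1 + ⋯ + Q_m and let R = sup{‖(H − zI)^{-1} y‖ : y ∈ Ran(I − S_m), ‖y‖ ≤ 1}. Then ‖(H − zI)^{-1}‖ ≤ (1 + Σ_{n=1}^m ‖Q_n‖) · R + Σ_{n=1}^m ‖Q_n‖ / |λ_n − z|. -/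
/-- Resolvent norm bound through a finite family of mutually orthogonal spectral
projections: with `S = Q_1 + ⋯ + Q_m` and
`R = sup {‖(H - zI)⁻¹ y‖ : y ∈ Ran(I - S), ‖y‖ ≤ 1}`, we have
`‖(H - zI)⁻¹‖ ≤ (1 + Σ ‖Q_n‖) R + Σ ‖Q_n‖ / |λ_n - z|`. -/
theorem stmt9 {X : Type*} [NormedAddCommGroup X] [NormedSpace ℂ X] [CompleteSpace X]
    (H : X →L[ℂ] X) (z : ℂ) (hz : IsUnit (H - z • 1))
    (m : ℕ) (Q : Fin m → X →L[ℂ] X) (lam : Fin m → ℂ)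
    (hproj : ∀ n, Q n * Q n = Q n)
    (horth : ∀ n n', n ≠ n' → Q n * Q n' = 0)
    (hcomm : ∀ n, Q n * H = H * Q n)
    (heig : ∀ n, H * Q n = lam n • Q n)
    (hne : ∀ n, lam n ≠ z) :
    ‖Ring.inverse (H - z • 1)‖ ≤
      (1 + ∑ n, ‖Q n‖) *
        sSup {r : ℝ | ∃ y : X, y ∈ Set.range ⇑((1 : X →L[ℂ] X) - ∑ n, Q n) ∧ ‖y‖ ≤ 1 ∧
          r = ‖Ring.inverse (H - z • 1) y‖}
      + ∑ n, ‖Q n‖ / ‖lam n - z‖ := by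
  set T : X →L[ℂ] X := H - z • 1 with hT
  set Ti : X →L[ℂ] X := Ring.inverse T with hTi
  have hTiT : Ti * T = 1 := Ring.inverse_mul_cancel T hz
  set S : X →L[ℂ] X := ∑ n, Q n with hS
  set Rs : Set ℝ := {r : ℝ | ∃ y : X, y ∈ Set.range ⇑((1 : X →L[ℂ] X) - S) ∧ ‖y‖ ≤ 1 ∧
          r = ‖Ti y‖} with hRs
  have hbdd : BddAbove Rs := by
    refine ⟨‖Ti‖, ?_⟩
    rintro r ⟨y, -, hy1, rfl⟩
    calc ‖Ti y‖ ≤ ‖Ti‖ * ‖y‖ := Ti.le_opNorm y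
    _ ≤ ‖Ti‖ * 1 := by nlinarith [norm_nonneg Ti]
    _ = ‖Ti‖ := mul_one _
  have h0 : (0 : ℝ) ∈ Rs := ⟨0, ⟨0, by simp⟩, by simp, by simp⟩
  set R : ℝ := sSup Rs with hR
  have hR0 : 0 ≤ R := le_csSup hbdd h0
  -- key bound on the range of 1 - S
  have hrange : ∀ y ∈ Set.range ⇑((1 : X →L[ℂ] X) - S), ‖Ti y‖ ≤ R * ‖y‖ := by
    rintro y hy
    rcases eq_or_ne y 0 with rfl | hy0
    · simp
    · have hny : (0:ℝ) < ‖y‖ := norm_pos_iff.mpr hy0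
      set c : ℂ := (‖y‖ : ℂ)⁻¹ with hc
      have hy' : c • y ∈ Set.range ⇑((1 : X →L[ℂ] X) - S) := by
        obtain ⟨x, rfl⟩ := hy
        exact ⟨c • x, by simp⟩
      have hnc : ‖c‖ = ‖y‖⁻¹ := by
        simp [hc]
      have hny' : ‖c • y‖ ≤ 1 := by
        rw [norm_smul, hnc, inv_mul_cancel₀ hny.ne']
      have hmem : ‖Ti (c • y)‖ ∈ Rs := ⟨c • y, hy', hny', rfl⟩
      have hle : ‖Ti (c • y)‖ ≤ R := le_csSup hbdd hmem
      have heq : ‖Ti (c • y)‖ = ‖y‖⁻¹ * ‖Ti y‖ := by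
        rw [map_smul, norm_smul, hnc]
      rw [heq] at hle
      calc ‖Ti y‖ = ‖y‖ * (‖y‖⁻¹ * ‖Ti y‖) := by field_simp
      _ ≤ ‖y‖ * R := by nlinarith
      _ = R * ‖y‖ := mul_comm _ _
  -- Ti ∘ Q n
  have hTQ : ∀ n, Ti * Q n = (lam n - z)⁻¹ • Q n := by
    intro n
    have h1 : T * Q n = (lam n - z) • Q n := by
      rw [hT, sub_mul, heig, smul_mul_assoc, one_mul, sub_smul]
    have h2 : Q n = (lam n - z) • (Ti * Q n) := by
      calc Q n = (Ti * T) * Q n := by rw [hTiT, one_mul]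
      _ = Ti * ((lam n - z) • Q n) := by rw [mul_assoc, h1]
      _ = (lam n - z) • (Ti * Q n) := by rw [mul_smul_comm]
    have hlz : lam n - z ≠ 0 := sub_ne_zero.mpr (hne n)
    calc Ti * Q n = (lam n - z)⁻¹ • ((lam n - z) • (Ti * Q n)) := by
          rw [smul_smul, inv_mul_cancel₀ hlz, one_smul]
    _ = (lam n - z)⁻¹ • Q n := by rw [← h2]
  have hQbound : ∀ n (x : X), ‖Ti (Q n x)‖ ≤ ‖Q n‖ / ‖lam n - z‖ * ‖x‖ := by
    intro n x
    have : Ti (Q n x) = (lam n - z)⁻¹ • Q n x := by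
      have := congrArg (fun (A : X →L[ℂ] X) => A x) (hTQ n)
      simpa using this
    rw [this, norm_smul, norm_inv]
    have hlz : (0:ℝ) < ‖lam n - z‖ := norm_pos_iff.mpr (sub_ne_zero.mpr (hne n))
    rw [div_eq_inv_mul, mul_assoc]
    gcongr
    exact (Q n).le_opNorm x
  refine ContinuousLinearMap.opNorm_le_bound _ ?_ ?_
  · have : 0 ≤ ∑ n, ‖Q n‖ / ‖lam n - z‖ :=
      Finset.sum_nonneg fun n _ => div_nonneg (norm_nonneg _) (norm_nonneg _)
    have h1 : 0 ≤ 1 + ∑ n, ‖Q n‖ := by positivity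
    nlinarith
  · intro x
    have hdecomp : Ti x = Ti (((1 : X →L[ℂ] X) - S) x) + ∑ n, Ti (Q n x) := by
      have : x = ((1 : X →L[ℂ] X) - S) x + ∑ n, Q n x := by
        simp [hS, ContinuousLinearMap.sum_apply]
      calc Ti x = Ti (((1 : X →L[ℂ] X) - S) x + ∑ n, Q n x) := by rw [← this]
      _ = Ti (((1 : X →L[ℂ] X) - S) x) + ∑ n, Ti (Q n x) := by
          rw [map_add, map_sum]
    have h1 : ‖Ti (((1 : X →L[ℂ] X) - S) x)‖ ≤ R * ‖((1 : X →L[ℂ] X) - S) x‖ :=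
      hrange _ ⟨x, rfl⟩
    have h2 : ‖((1 : X →L[ℂ] X) - S) x‖ ≤ (1 + ∑ n, ‖Q n‖) * ‖x‖ := by
      have : ‖x - ∑ n, Q n x‖ ≤ ‖x‖ + ∑ n, ‖Q n‖ * ‖x‖ := by
        refine (norm_sub_le _ _).trans ?_
        gcongr
        refine (norm_sum_le _ _).trans ?_
        exact Finset.sum_le_sum fun n _ => (Q n).le_opNorm x
      simpa [hS, ContinuousLinearMap.sum_apply, add_mul, Finset.sum_mul] using this
    have h3 : ‖∑ n, Ti (Q n x)‖ ≤ (∑ n, ‖Q n‖ / ‖lam n - z‖) * ‖x‖ := by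
      refine (norm_sum_le _ _).trans ?_
      rw [Finset.sum_mul]
      exact Finset.sum_le_sum fun n _ => hQbound n x
    calc ‖Ti x‖ ≤ ‖Ti (((1 : X →L[ℂ] X) - S) x)‖ + ‖∑ n, Ti (Q n x)‖ := by
          rw [hdecomp]; exact norm_add_le _ _
    _ ≤ R * ((1 + ∑ n, ‖Q n‖) * ‖x‖) + (∑ n, ‖Q n‖ / ‖lam n - z‖) * ‖x‖ := by
        refine add_le_add (h1.trans ?_) h3
        exact mul_le_mul_of_nonneg_left h2 hR0
    _ = ((1 + ∑ n, ‖Q n‖) * R + ∑ n, ‖Q n‖ / ‖lam n - z‖) * ‖x‖ := by ring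
end

section
/- Let X be a complex Banach space, H a bounded linear operator on X, M > 0 and λ ∈ ℝ, and suppose that ‖exp(−tH)‖ ≤ M e^{−λt} for all real t ≥ 0, where exp denotes the operator exponential. Then every z ∈ ℂ with Re(z) < λ lies in the resolvent set of H (i.e. H − zI is invertible), and ‖(H − zI)^{-1}‖ ≤ M / (λ − Re(z)). -/
open MeasureTheory Set Filter NormedSpace Topology

set_option maxHeartbeats 1000000
set_option synthInstance.maxHeartbeats 200000

/-- Bounded-operator Hille–Yosida resolvent estimate: if `‖exp(-tH)‖ ≤ M e^{-λ t}` for all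
`t ≥ 0`, then every `z` with `Re(z) < λ` is in the resolvent set of `H` and
`‖(H - zI)⁻¹‖ ≤ M / (λ - Re(z))`. -/
theorem stmt10 {X : Type*} [NormedAddCommGroup X] [NormedSpace ℂ X] [CompleteSpace X]
    (H : X →L[ℂ] X) (M : ℝ) (hM : 0 < M) (lam : ℝ)
    (hexp : ∀ t : ℝ, 0 ≤ t →
      ‖NormedSpace.exp ((-(t : ℂ)) • H)‖ ≤ M * Real.exp (-(lam * t)))
    (z : ℂ) (hz : z.re < lam) :
    IsUnit (H - z • 1) ∧ ‖Ring.inverse (H - z • 1)‖ ≤ M / (lam - z.re) := by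
  set b : ℝ := lam - z.re with hbdef
  have hb0 : 0 < b := by simp only [hbdef]; linarith
  set E : ℝ → (X →L[ℂ] X) := fun t => NormedSpace.exp ((t : ℂ) • (-H : X →L[ℂ] X)) with hEdef
  have hE_eq : ∀ t : ℝ, E t = NormedSpace.exp ((-(t : ℂ)) • H) := by
    intro t; simp only [hEdef, smul_neg, neg_smul]
  set G : ℝ → (X →L[ℂ] X) := fun t => Complex.exp (z * t) • E t with hGdef
  -- norm bound for G
  have hGnorm : ∀ t : ℝ, 0 ≤ t → ‖G t‖ ≤ M * Real.exp (-b * t) := by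
    intro t ht
    have habs : ‖Complex.exp (z * (t : ℂ))‖ = Real.exp (z.re * t) := by
      rw [Complex.norm_exp, Complex.mul_re]
      simp
    have h1 : ‖G t‖ = Real.exp (z.re * t) * ‖E t‖ := by
      exact (norm_smul (Complex.exp (z * (t : ℂ))) (E t)).trans (by rw [habs])
    rw [h1, hE_eq]
    calc Real.exp (z.re * t) * ‖NormedSpace.exp ((-(t : ℂ)) • H)‖
        ≤ Real.exp (z.re * t) * (M * Real.exp (-(lam * t))) :=
          mul_le_mul_of_nonneg_left (hexp t ht) (Real.exp_nonneg _)
      _ = M * Real.exp (-b * t) := by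
          rw [← mul_assoc, mul_comm (Real.exp _) M, mul_assoc, ← Real.exp_add]
          congr 1
          simp only [hbdef]; ring
  -- derivative of G
  have hG' : ∀ t : ℝ, HasDerivAt G
      (Complex.exp (z * t) • (E t * (-H)) + (z * Complex.exp (z * t)) • E t) t := by
    intro t
    have h1 : HasDerivAt (fun y : ℝ => Complex.exp (z * y)) (z * Complex.exp (z * t)) t := by
      have h := (((hasDerivAt_id (t : ℂ)).const_mul z).cexp)
      simpa [mul_comm] using h.comp_ofReal
    have h2 : HasDerivAt E (E t * (-H)) t := by
      have hg := hasDerivAt_exp_smul_const (𝕂 := ℂ) (-H : X →L[ℂ] X) (t : ℂ)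
      have := hg.scomp t Complex.ofRealCLM.hasDerivAt
      simpa [hEdef, Function.comp_def] using this
    exact h1.smul h2
  -- pointwise factorizations of G'
  have hcomm : ∀ t : ℝ, E t * H = H * E t := by
    intro t
    have : Commute H ((t : ℂ) • (-H : X →L[ℂ] X)) :=
      ((Commute.refl H).neg_right).smul_right _
    exact (this.exp_right).symm.eq
  have hfac : ∀ t : ℝ,
      Complex.exp (z * t) • (E t * (-H)) + (z * Complex.exp (z * t)) • E t
        = G t * (z • 1 - H) := by
    intro t
    rw [hGdef]
    simp only
    rw [smul_mul_assoc, mul_sub, mul_smul_comm, mul_one, smul_sub, smul_smul,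
      mul_comm (Complex.exp (z * t)) z, mul_neg, smul_neg, sub_eq_add_neg, add_comm]
  have hfac' : ∀ t : ℝ,
      Complex.exp (z * t) • (E t * (-H)) + (z * Complex.exp (z * t)) • E t
        = (z • 1 - H) * G t := by
    intro t
    rw [hfac t, hGdef]
    simp only
    rw [smul_mul_assoc, mul_smul_comm]
    congr 1
    rw [mul_sub, sub_mul, smul_mul_assoc, mul_smul_comm, one_mul, mul_one, hcomm t]
  -- integrability of G
  have hcontG : Continuous G := by
    exact continuous_iff_continuousAt.2 fun t => (hG' t).continuousAt
  have hmeasG : AEStronglyMeasurable G (volume.restrict (Ioi (0:ℝ))) :=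
    hcontG.aestronglyMeasurable
  have hbound_int : IntegrableOn (fun t : ℝ => M * Real.exp (-b * t)) (Ioi (0:ℝ)) :=
    (exp_neg_integrableOn_Ioi 0 hb0).const_mul M
  have hGint : IntegrableOn G (Ioi (0:ℝ)) := by
    refine Integrable.mono' hbound_int hmeasG ?_
    rw [ae_restrict_iff' measurableSet_Ioi]
    exact Eventually.of_forall fun t ht => hGnorm t (le_of_lt ht)
  -- integrability of G'
  have hG'int : IntegrableOn (fun t => G t * (z • 1 - H)) (Ioi (0:ℝ)) := by
    refine Integrable.mono' (hbound_int.mul_const ‖(z • (1:X →L[ℂ] X) - H)‖) ?_ ?_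
    · exact hmeasG.mul_const _
    · rw [ae_restrict_iff' measurableSet_Ioi]
      refine Eventually.of_forall fun t ht => ?_
      calc ‖G t * (z • 1 - H)‖ ≤ ‖G t‖ * ‖(z • (1:X →L[ℂ] X) - H)‖ := norm_mul_le _ _
        _ ≤ M * Real.exp (-b * t) * ‖(z • (1:X →L[ℂ] X) - H)‖ :=
            mul_le_mul_of_nonneg_right (hGnorm t (le_of_lt ht)) (norm_nonneg _)
  -- limit at infinity
  have hGlim : Tendsto G atTop (𝓝 0) := by
    have hlim : Tendsto (fun t : ℝ => M * Real.exp (-b * t)) atTop (𝓝 0) := by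
      have h1 : Tendsto (fun t : ℝ => b * t) atTop atTop :=
        Tendsto.const_mul_atTop hb0 tendsto_id
      have h2 : Tendsto (fun t : ℝ => Real.exp (-(b * t))) atTop (𝓝 0) :=
        Real.tendsto_exp_neg_atTop_nhds_zero.comp h1
      have := h2.const_mul M
      simpa [neg_mul] using this
    refine squeeze_zero_norm' ?_ hlim
    filter_upwards [Ici_mem_atTop (0:ℝ)] with t ht
    exact hGnorm t ht
  have hG0 : G 0 = 1 := by
    simp [hGdef, hEdef]
  -- FTC
  have hFTC : ∫ t in Ioi (0:ℝ), G t * (z • 1 - H) = -1 := by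
    have := integral_Ioi_of_hasDerivAt_of_tendsto' (a := 0)
      (f := G) (f' := fun t => G t * (z • 1 - H))
      (fun t _ => by show HasDerivAt G (G t * (z • 1 - H)) t; rw [← hfac t]; exact hG' t) hG'int hGlim
    rw [this, hG0, zero_sub]
  have hFTC' : ∫ t in Ioi (0:ℝ), (z • 1 - H) * G t = -1 := by
    rw [← hFTC]
    refine setIntegral_congr_fun measurableSet_Ioi fun t _ => ?_
    rw [← hfac t, ← hfac' t]
  -- pull multiplication out of integrals
  set R : X →L[ℂ] X := ∫ t in Ioi (0:ℝ), G t with hRdef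
  have hmulR : R * (z • 1 - H) = -1 := by
    set L : (X →L[ℂ] X) →L[ℂ] (X →L[ℂ] X) :=
      (ContinuousLinearMap.mul ℂ (X →L[ℂ] X)).flip (z • 1 - H) with hLdef
    have hL : ∀ a : X →L[ℂ] X, L a = a * (z • 1 - H) := fun a => rfl
    have := L.integral_comp_comm hGint
    simp only [hL] at this
    rw [← hRdef] at this  -- may not be needed
    rw [hFTC] at this
    exact this.symm
  have hmulL : (z • 1 - H) * R = -1 := by
    set L : (X →L[ℂ] X) →L[ℂ] (X →L[ℂ] X) :=
      (ContinuousLinearMap.mul ℂ (X →L[ℂ] X)) (z • 1 - H) with hLdef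
    have hL : ∀ a : X →L[ℂ] X, L a = (z • 1 - H) * a := fun a => rfl
    have := L.integral_comp_comm hGint
    simp only [hL] at this
    rw [hFTC'] at this
    exact this.symm
  -- build the unit
  have h1 : (H - z • 1) * R = 1 := by
    rw [← neg_sub (z • (1 : X →L[ℂ] X)) H, neg_mul, hmulL, neg_neg]
  have h2 : R * (H - z • 1) = 1 := by
    rw [← neg_sub (z • (1 : X →L[ℂ] X)) H, mul_neg, hmulR, neg_neg]
  set u : (X →L[ℂ] X)ˣ := ⟨H - z • 1, R, h1, h2⟩ with hudef
  refine ⟨⟨u, rfl⟩, ?_⟩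
  have hinv : Ring.inverse (H - z • 1) = R := by
    have := Ring.inverse_unit u
    simpa [hudef] using this
  rw [hinv]
  -- norm bound on R
  have hRnorm : ‖R‖ ≤ ∫ t in Ioi (0:ℝ), M * Real.exp (-b * t) := by
    refine norm_integral_le_of_norm_le hbound_int ?_
    rw [ae_restrict_iff' measurableSet_Ioi]
    exact Eventually.of_forall fun t ht => hGnorm t (le_of_lt ht)
  have hval : ∫ t in Ioi (0:ℝ), M * Real.exp (-b * t) = M / b := by
    rw [integral_const_mul]
    have h := integral_comp_mul_left_Ioi (fun x : ℝ => Real.exp (-x)) 0 hb0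
    simp only [mul_zero, integral_exp_neg_Ioi_zero, smul_eq_mul, mul_one, neg_mul] at h ⊢
    rw [h]
    field_simp
  calc ‖R‖ ≤ M / b := hval ▸ hRnorm
    _ = M / (lam - z.re) := by rw [hbdef]
end

section
/- Let 𝓗 be a complex Hilbert space, H a bounded linear operator on 𝓗, and Θ a bounded self-adjoint operator on 𝓗 that is positive and invertible (there is c > 0 with ⟨Θx, x⟩ ≥ c‖x‖² for all x) and satisfies the quasi-Hermiticity relation H*Θ = ΘH. Then for every z ∈ ℂ not in Sp(H), dist(z, Sp(H)) ≤ √(‖Θ‖ · ‖Θ^{-1}‖) · ‖(H − zI)^{-1}‖^{-1}; equivalently, ‖(H − zI)^{-1}‖ ≤ √(‖Θ‖ · ‖Θ^{-1}‖) / dist(z, Sp(H)). -/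
set_option maxHeartbeats 1000000

open scoped Pointwise


open scoped InnerProductSpace

/-- Quasi-Hermitian operators have trivial pseudospectrum: if `Θ` is bounded,
self-adjoint, positive and invertible (`⟨Θx, x⟩ ≥ c‖x‖²` for some `c > 0`) with
`H*Θ = ΘH`, then for every `z ∉ Sp(H)`,
`dist(z, Sp(H)) ≤ √(‖Θ‖·‖Θ⁻¹‖) · ‖(H - zI)⁻¹‖⁻¹`. -/
theorem stmt14 {𝓗 : Type*} [NormedAddCommGroup 𝓗] [InnerProductSpace ℂ 𝓗]
    [CompleteSpace 𝓗]
    (H Θ : 𝓗 →L[ℂ] 𝓗) (hΘsa : IsSelfAdjoint Θ)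
    (c : ℝ) (hc : 0 < c) (hpos : ∀ x : 𝓗, c * ‖x‖ ^ 2 ≤ (⟪Θ x, x⟫_ℂ).re)
    (hΘinv : IsUnit Θ)
    (hquasi : ContinuousLinearMap.adjoint H * Θ = Θ * H)
    (z : ℂ) (hz : z ∉ spectrum ℂ H) :
    Metric.infDist z (spectrum ℂ H) ≤
      Real.sqrt (‖Θ‖ * ‖Ring.inverse Θ‖) * ‖Ring.inverse (H - z • 1)‖⁻¹ := by
  rcases subsingleton_or_nontrivial 𝓗 with hsub | hnt
  · have hsp : spectrum ℂ H = ∅ := by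
      ext x; simp [spectrum.mem_iff, isUnit_of_subsingleton]
    rw [hsp, Metric.infDist_empty]
    positivity
  have hΘpos : (0 : 𝓗 →L[ℂ] 𝓗) ≤ Θ := by
    rw [ContinuousLinearMap.nonneg_iff_isPositive]
    exact ⟨ContinuousLinearMap.isSelfAdjoint_iff_isSymmetric.mp hΘsa, fun x => le_trans (by positivity) (hpos x)⟩
  set S : 𝓗 →L[ℂ] 𝓗 := CFC.sqrt Θ with hSdef
  have hS2 : S * S = Θ := CFC.sqrt_mul_sqrt_self Θ hΘpos
  have hSnn : (0 : 𝓗 →L[ℂ] 𝓗) ≤ S := CFC.sqrt_nonneg Θ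
  have hSsa : IsSelfAdjoint S := hSnn.isSelfAdjoint
  have hcommΘS : Commute Θ S := by
    rw [← hS2]; exact (Commute.refl S).mul_left (Commute.refl S)
  have hSu : IsUnit S := by
    obtain ⟨u, hu⟩ := hΘinv
    have hci : Commute S (↑u⁻¹ : 𝓗 →L[ℂ] 𝓗) :=
      Commute.units_inv_right (by rw [hu]; exact hcommΘS.symm)
    refine isUnit_iff_exists.mpr ⟨↑u⁻¹ * S, ?_, ?_⟩
    · rw [← mul_assoc, hci.eq, mul_assoc, hS2, ← hu, Units.inv_mul]
    · rw [mul_assoc, hS2, ← hu, Units.inv_mul]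
  set Si : 𝓗 →L[ℂ] 𝓗 := Ring.inverse S with hSidef
  have hSiS : Si * S = 1 := Ring.inverse_mul_cancel S hSu
  have hSSi : S * Si = 1 := Ring.mul_inverse_cancel S hSu
  have hSiu : IsUnit Si := isUnit_ringInverse.mpr hSu
  have hSiStar : star Si = Si := by
    rw [hSidef, ← Ring.inverse_star, hSsa.star_eq]
  set Aop : 𝓗 →L[ℂ] 𝓗 := S * H * Si with hAdef
  have hspA : spectrum ℂ Aop = spectrum ℂ H := by
    have : Aop = ↑hSu.unit * H * ↑hSu.unit⁻¹ := by
      rw [hAdef, hSu.unit_spec, ← Ring.inverse_unit hSu.unit, hSu.unit_spec]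
    rw [this, spectrum.units_conjugate]
  have key : ContinuousLinearMap.adjoint H * (S * S) = S * S * H := by
    rw [hS2]; exact hquasi
  have cancel : ∀ X Y : 𝓗 →L[ℂ] 𝓗, S * X * S = S * Y * S → X = Y := by
    intro X Y h
    calc X = (Si * S) * X * (S * Si) := by rw [hSiS, hSSi, one_mul, mul_one]
    _ = Si * (S * X * S) * Si := by noncomm_ring
    _ = Si * (S * Y * S) * Si := by rw [h]
    _ = (Si * S) * Y * (S * Si) := by noncomm_ring
    _ = Y := by rw [hSiS, hSSi, one_mul, mul_one]
  have hAsa : IsSelfAdjoint Aop := by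
    have hstar : star Aop = Si * (ContinuousLinearMap.adjoint H * S) := by
      rw [hAdef, star_mul, star_mul, hSiStar, hSsa.star_eq,
        ContinuousLinearMap.star_eq_adjoint]
    have hmain : S * (Si * (ContinuousLinearMap.adjoint H * S)) * S = S * Aop * S := by
      calc S * (Si * (ContinuousLinearMap.adjoint H * S)) * S
          = (S * Si) * (ContinuousLinearMap.adjoint H * (S * S)) := by noncomm_ring
      _ = (S * Si) * (S * S * H) := by rw [key]
      _ = S * Aop * S := by
          rw [hAdef, hSSi, one_mul,
            show S * (S * H * Si) * S = (S * S * H) * (Si * S) from by noncomm_ring,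
            hSiS, mul_one]
    exact hstar.trans (cancel _ _ hmain)
  -- resolvent facts
  have hHzu : IsUnit (H - z • 1) := by
    have h := spectrum.notMem_iff.mp hz
    rw [show H - z • 1 = -(algebraMap ℂ (𝓗 →L[ℂ] 𝓗) z - H) from by
      rw [Algebra.algebraMap_eq_smul_one]; abel]
    exact h.neg
  have hAz : Aop - z • 1 = S * (H - z • 1) * Si := by
    simp only [hAdef, mul_sub, sub_mul, mul_smul_comm, smul_mul_assoc, mul_one, hSSi]
  set RH : 𝓗 →L[ℂ] 𝓗 := Ring.inverse (H - z • 1) with hRHdef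
  have hBzRH : (H - z • 1) * RH = 1 := Ring.mul_inverse_cancel _ hHzu
  have hRHBz : RH * (H - z • 1) = 1 := Ring.inverse_mul_cancel _ hHzu
  have key2 : ∀ X Y : 𝓗 →L[ℂ] 𝓗, X * Y = 1 → (S * X * Si) * (S * Y * Si) = 1 := by
    intro X Y hXY
    calc (S * X * Si) * (S * Y * Si) = S * (X * ((Si * S) * Y)) * Si := by noncomm_ring
    _ = 1 := by rw [hSiS, one_mul, hXY, mul_one, hSSi]
  set U : (𝓗 →L[ℂ] 𝓗)ˣ :=
    ⟨S * (H - z • 1) * Si, S * RH * Si, key2 _ _ hBzRH, key2 _ _ hRHBz⟩ with hUdef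
  have hAzu : IsUnit (Aop - z • 1) := by rw [hAz]; exact U.isUnit
  set RA : 𝓗 →L[ℂ] 𝓗 := Ring.inverse (Aop - z • 1) with hRAdef
  have hRAeq : RA = S * RH * Si := by
    rw [hRAdef, hAz, show S * (H - z • 1) * Si = (U : 𝓗 →L[ℂ] 𝓗) from rfl,
      Ring.inverse_unit]
    rfl
  have hRH : RH = Si * RA * S := by
    rw [hRAeq, show Si * (S * RH * Si) * S = (Si * S) * RH * (Si * S) from by noncomm_ring,
      hSiS, one_mul, mul_one]
  -- distance
  set d : ℝ := Metric.infDist z (spectrum ℂ H) with hddef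
  have hspne : (spectrum ℂ H).Nonempty := spectrum.nonempty H
  have hdpos : 0 < d :=
    ((spectrum.isClosed H).notMem_iff_infDist_pos hspne).mp hz
  -- star-normality of RA
  have hstarAz : star (Aop - z • 1) = Aop - (starRingEnd ℂ z) • 1 := by
    rw [star_sub, star_smul, star_one, hAsa.star_eq]; rfl
  have hcommAz : Commute (Aop - z • 1) (star (Aop - z • 1)) := by
    rw [hstarAz]
    have c1 : Commute Aop ((starRingEnd ℂ z) • (1 : 𝓗 →L[ℂ] 𝓗)) :=
      (Commute.one_right Aop).smul_right _
    have c2 : Commute (z • (1 : 𝓗 →L[ℂ] 𝓗)) Aop :=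
      (Commute.one_left Aop).smul_left _
    have c3 : Commute (z • (1 : 𝓗 →L[ℂ] 𝓗)) ((starRingEnd ℂ z) • (1 : 𝓗 →L[ℂ] 𝓗)) :=
      (((Commute.refl (1 : 𝓗 →L[ℂ] 𝓗)).smul_left z).smul_right _)
    exact ((Commute.refl Aop).sub_right c1).sub_left (c2.sub_right c3)
  haveI hRAnormal : IsStarNormal RA := by
    refine ⟨?_⟩
    rw [hRAdef, ← Ring.inverse_star]
    exact hcommAz.symm.ringInverse_ringInverse
  -- spectrum bound
  have hspec : ∀ μ ∈ spectrum ℂ RA, ‖μ‖ ≤ d⁻¹ := by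
    intro μ hμ
    have e : RA = ↑hAzu.unit⁻¹ := by
      refine (Units.inv_eq_of_mul_eq_one_right ?_).symm
      rw [hAzu.unit_spec]
      exact Ring.mul_inverse_cancel _ hAzu
    rw [e, ← spectrum.map_inv hAzu.unit] at hμ
    rw [Set.mem_inv] at hμ
    rw [hAzu.unit_spec] at hμ
    have hAzspec : μ⁻¹ ∈ spectrum ℂ H - ({z} : Set ℂ) := by
      rw [← hspA, spectrum.sub_singleton_eq]
      rwa [show Aop - algebraMap ℂ (𝓗 →L[ℂ] 𝓗) z = Aop - z • 1 from by
        rw [Algebra.algebraMap_eq_smul_one]]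
    obtain ⟨lam, hlam, w, hw, hlw⟩ := Set.mem_sub.mp hAzspec
    rw [Set.mem_singleton_iff] at hw
    rw [hw] at hlw
    have hdle : d ≤ ‖lam - z‖ := by
      have := Metric.infDist_le_dist_of_mem (x := z) hlam
      rwa [dist_eq_norm, ← norm_neg, neg_sub] at this
    have hμne : μ ≠ 0 := by
      intro h0
      rw [h0, inv_zero] at hlw
      have h0sp : (0 : ℂ) ∈ spectrum ℂ (Aop - z • 1) := by
        rw [show Aop - z • 1 = Aop - algebraMap ℂ (𝓗 →L[ℂ] 𝓗) z from by
          rw [Algebra.algebraMap_eq_smul_one], ← spectrum.sub_singleton_eq, hspA]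
        exact Set.mem_sub.mpr ⟨lam, hlam, z, rfl, hlw⟩
      exact spectrum.zero_notMem ℂ hAzu h0sp
    have hμ_eq : μ = (lam - z)⁻¹ := by
      rw [hlw, inv_inv]
    rw [hμ_eq, norm_inv]
    exact inv_anti₀ hdpos hdle
  have hsr : spectralRadius ℂ RA = ‖RA‖₊ := IsStarNormal.spectralRadius_eq_nnnorm RA
  have hRAle : ‖RA‖ ≤ d⁻¹ := by
    have h1 : (‖RA‖₊ : ENNReal) ≤ ENNReal.ofReal d⁻¹ := by
      rw [← hsr, spectralRadius]
      refine iSup₂_le fun μ hμ => ?_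
      rw [← ENNReal.ofReal_coe_nnreal, coe_nnnorm]
      exact ENNReal.ofReal_le_ofReal (hspec μ hμ)
    rw [← ENNReal.ofReal_coe_nnreal, coe_nnnorm] at h1
    exact (ENNReal.ofReal_le_ofReal_iff (by positivity)).mp h1
  -- norms of S, Si
  have hnS : ‖S‖ * ‖S‖ = ‖Θ‖ := by
    rw [← hS2, ← CStarRing.norm_star_mul_self, hSsa.star_eq]
  have hnSi : ‖Si‖ * ‖Si‖ = ‖Ring.inverse Θ‖ := by
    rw [← hS2, Ring.mul_inverse_rev' (Commute.refl S), ← hSidef,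
      ← CStarRing.norm_star_mul_self, hSiStar]
  have hsqrt : Real.sqrt (‖Θ‖ * ‖Ring.inverse Θ‖) = ‖S‖ * ‖Si‖ := by
    rw [← hnS, ← hnSi, show ‖S‖ * ‖S‖ * (‖Si‖ * ‖Si‖) = (‖S‖ * ‖Si‖) ^ 2 from by ring,
      Real.sqrt_sq (by positivity)]
  have hRHpos : 0 < ‖RH‖ := by
    rw [norm_pos_iff]
    intro h0
    apply one_ne_zero (α := 𝓗 →L[ℂ] 𝓗)
    rw [← hRHBz, h0, zero_mul]
  have hRHle : ‖RH‖ ≤ ‖Si‖ * ‖RA‖ * ‖S‖ := by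
    rw [hRH]
    exact le_trans (norm_mul_le _ _)
      (mul_le_mul_of_nonneg_right (norm_mul_le _ _) (norm_nonneg _))
  rw [hsqrt, show ‖S‖ * ‖Si‖ * ‖RH‖⁻¹ = ‖S‖ * ‖Si‖ / ‖RH‖ from
    (div_eq_mul_inv _ _).symm, le_div_iff₀ hRHpos]
  calc d * ‖RH‖ ≤ d * (‖Si‖ * ‖RA‖ * ‖S‖) :=
        mul_le_mul_of_nonneg_left hRHle hdpos.le
    _ ≤ d * (‖Si‖ * d⁻¹ * ‖S‖) := by
        have h := mul_le_mul_of_nonneg_right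
          (mul_le_mul_of_nonneg_left hRAle (norm_nonneg Si)) (norm_nonneg S)
        exact mul_le_mul_of_nonneg_left h hdpos.le
    _ = ‖S‖ * ‖Si‖ := by field_simp
end

section
/- Let 𝓗 be a complex Hilbert space, H a bounded linear operator on 𝓗, and λ ∈ ℂ. Let E and F be closed subspaces of 𝓗 such that every φ ∈ E satisfies (H − λI)φ = 0, F is H-invariant, 𝓗 = E ⊕ F is a (not necessarily orthogonal) direct sum with bounded associated projections, and δ₀ := inf{‖(H − λI) y‖ : y ∈ F, ‖y‖ = 1} > 0. Let (z_N) be a sequence in ℂ with z_N → λ and (f_N) a sequence of unit vectors with ‖(H − z_N I) f_N‖ → 0. Write f_N = a_N + b_N with a_N ∈ E and b_N ∈ F. Then ‖b_N‖ → 0 as N → ∞. -/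
/-- Eigenfunction convergence: suppose `𝓗 = E ⊕ F` with bounded associated projections,
where every `φ ∈ E` is an eigenvector of `H` for `λ`, `F` is closed and `H`-invariant,
and `H - λI` is bounded below on `F` (i.e. `inf{‖(H - λI) y‖ : y ∈ F, ‖y‖ = 1} > 0`).
If `z_N → λ` and `(f_N)` are unit vectors with `‖(H - z_N I) f_N‖ → 0`, writing
`f_N = a_N + b_N` with `a_N ∈ E`, `b_N ∈ F`, then `‖b_N‖ → 0`. -/
theorem stmt16 {𝓗 : Type*} [NormedAddCommGroup 𝓗] [InnerProductSpace ℂ 𝓗]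
    [CompleteSpace 𝓗]
    (H : 𝓗 →L[ℂ] 𝓗) (lam : ℂ) (E F : Submodule ℂ 𝓗)
    (hEclosed : IsClosed (E : Set 𝓗)) (hFclosed : IsClosed (F : Set 𝓗))
    (hE : ∀ φ ∈ E, H φ = lam • φ)
    (hFinv : ∀ y ∈ F, H y ∈ F)
    (P : 𝓗 →L[ℂ] 𝓗)
    (hPE : ∀ x : 𝓗, P x ∈ E) (hPF : ∀ x : 𝓗, x - P x ∈ F)
    (hPidE : ∀ x ∈ E, P x = x) (hPzeroF : ∀ x ∈ F, P x = 0)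
    (δ₀ : ℝ) (hδ₀ : 0 < δ₀) (hlow : ∀ y ∈ F, δ₀ * ‖y‖ ≤ ‖H y - lam • y‖)
    (z : ℕ → ℂ) (hz : Filter.Tendsto z Filter.atTop (nhds lam))
    (f : ℕ → 𝓗) (hf : ∀ N, ‖f N‖ = 1)
    (hres : Filter.Tendsto (fun N => ‖H (f N) - z N • f N‖) Filter.atTop (nhds 0))
    (aa bb : ℕ → 𝓗) (haE : ∀ N, aa N ∈ E) (hbF : ∀ N, bb N ∈ F)
    (hsum : ∀ N, f N = aa N + bb N) :
    Filter.Tendsto (fun N => ‖bb N‖) Filter.atTop (nhds 0) := by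

  set C : ℝ := 1 + ‖P‖ with hC
  have hC0 : 0 ≤ C := by positivity
  -- key bound on the F-component of the residual
  have key : ∀ N, ‖H (bb N) - z N • bb N‖ ≤ C * ‖H (f N) - z N • f N‖ := by
    intro N
    have hPb : P (H (bb N) - z N • bb N) = 0 := by
      refine hPzeroF _ ?_
      exact F.sub_mem (hFinv _ (hbF N)) (F.smul_mem _ (hbF N))
    have hPa : P (H (aa N) - z N • aa N) = H (aa N) - z N • aa N := by
      refine hPidE _ ?_
      rw [hE _ (haE N)]
      exact E.sub_mem (E.smul_mem _ (haE N)) (E.smul_mem _ (haE N))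
    have hsplit : H (f N) - z N • f N
        = (H (aa N) - z N • aa N) + (H (bb N) - z N • bb N) := by
      rw [hsum N, map_add, smul_add]; abel
    have heq : H (bb N) - z N • bb N
        = (H (f N) - z N • f N) - P (H (f N) - z N • f N) := by
      rw [hsplit, map_add, hPa, hPb, add_zero]; abel
    rw [heq]
    calc ‖(H (f N) - z N • f N) - P (H (f N) - z N • f N)‖
        ≤ ‖H (f N) - z N • f N‖ + ‖P (H (f N) - z N • f N)‖ := norm_sub_le _ _
      _ ≤ ‖H (f N) - z N • f N‖ + ‖P‖ * ‖H (f N) - z N • f N‖ := by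
          gcongr; exact P.le_opNorm _
      _ = C * ‖H (f N) - z N • f N‖ := by ring
  -- eventually |z N - lam| ≤ δ₀/2
  have hev : ∀ᶠ N in Filter.atTop, ‖z N - lam‖ ≤ δ₀ / 2 := by
    have h0 : Filter.Tendsto (fun N => z N - lam) Filter.atTop (nhds (lam - lam)) :=
      hz.sub tendsto_const_nhds
    have : Filter.Tendsto (fun N => ‖z N - lam‖) Filter.atTop (nhds 0) := by
      simpa using h0.norm
    exact this.eventually_le_const (by linarith : (0:ℝ) < δ₀/2)
  have hbound : ∀ᶠ N in Filter.atTop,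
      ‖bb N‖ ≤ (2 * C / δ₀) * ‖H (f N) - z N • f N‖ := by
    filter_upwards [hev] with N hN
    have h1 : δ₀ * ‖bb N‖ ≤ ‖H (bb N) - lam • bb N‖ := hlow _ (hbF N)
    have h2 : ‖H (bb N) - lam • bb N‖
        ≤ ‖H (bb N) - z N • bb N‖ + ‖z N - lam‖ * ‖bb N‖ := by
      have : H (bb N) - lam • bb N = (H (bb N) - z N • bb N) + (z N - lam) • bb N := by
        rw [sub_smul]; abel
      rw [this]
      calc ‖(H (bb N) - z N • bb N) + (z N - lam) • bb N‖
          ≤ ‖H (bb N) - z N • bb N‖ + ‖(z N - lam) • bb N‖ := norm_add_le _ _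
        _ = ‖H (bb N) - z N • bb N‖ + ‖z N - lam‖ * ‖bb N‖ := by rw [norm_smul]
    have h3 : ‖z N - lam‖ * ‖bb N‖ ≤ (δ₀ / 2) * ‖bb N‖ := by
      gcongr
    have h4 : δ₀ * ‖bb N‖ ≤ 2 * C * ‖H (f N) - z N • f N‖ := by
      nlinarith [key N]
    rw [div_mul_eq_mul_div, le_div_iff₀ hδ₀]
    nlinarith
  have hg : Filter.Tendsto (fun N => (2 * C / δ₀) * ‖H (f N) - z N • f N‖)
      Filter.atTop (nhds 0) := by
    simpa using hres.const_mul (2 * C / δ₀)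
  exact squeeze_zero' (Filter.Eventually.of_forall fun N => norm_nonneg _) hbound hg
end
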